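/- arXiv:math/0010313 — 4 statements merged into one kernel-verified Lean document; each statement's English description precedes it below -/
import Mathlib

section
/- Let R be a Henselian local ring whose residue field Δ = R/m has characteristic 0, with residue map φ : R → Δ. Let F ⊆ R be a subfield (so that φ restricts to a field isomorphism of F onto the subfield F' = φ(F) of Δ), and let α ∈ Δ be a nonzero element algebraic over F' with monic minimal polynomial f̄ = X^m + β_1 X^{m−1} + ⋯ + β_m ∈ F'[X]. Let f = X^m + b_1 X^{m−1} + ⋯ + b_m ∈ F[X], where b_i ∈ F is the unique element with φ(b_i) = β_i. Then there exists a ∈ R such that f(a) = 0, a is a simple root of f, φ(a) = α, and f is the minimal polynomial of a over F; in particular a is algebraic over F. -/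
/-- Let `R` be a Henselian local ring with residue field `Δ` of
characteristic zero and residue map `φ`, `F ⊆ R` a subfield, and `α ∈ Δ` a nonzero
element algebraic over `F' = φ(F)` with monic minimal polynomial `f̄ ∈ F'[X]`.  Lifting
the coefficients of `f̄` to `F` gives a monic polynomial `f ∈ F[X]` (below: the data `p`
with `φ`-image having `α` as a root of minimal degree).  Then there is `a ∈ R` which is a
root of `f`, indeed a simple root (the derivative of `f` is a unit at `a`), with
`φ a = α`, and `f` is the minimal polynomial of `a` over `F`; in particular `a` is
algebraic over `F`. -/
theorem statement8 (R : Type u) [CommRing R] [IsLocalRing R] [HenselianLocalRing R]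
    [CharZero (IsLocalRing.ResidueField R)]
    (F : Subring R) (hF : IsField F)
    (α : IsLocalRing.ResidueField R) (hα : α ≠ 0)
    (p : Polynomial F) (hmonic : p.Monic)
    -- `α` is a root of the image `f̄` of `p` in `F'[X] ⊆ Δ[X]`:
    (hroot : Polynomial.eval₂ ((IsLocalRing.residue R).comp F.subtype) α p = 0)
    -- `f̄` is the minimal polynomial of `α` over `F'`, i.e. of minimal degree:
    (hmin : ∀ q : Polynomial F, q ≠ 0 →
      Polynomial.eval₂ ((IsLocalRing.residue R).comp F.subtype) α q = 0 →
      p.degree ≤ q.degree) :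
    ∃ a : R,
      -- `a` is a root of `f`:
      Polynomial.eval₂ F.subtype a p = 0 ∧
      -- `a` is a simple root of `f`:
      IsUnit (Polynomial.eval₂ F.subtype a (Polynomial.derivative p)) ∧
      -- `φ a = α`:
      IsLocalRing.residue R a = α ∧
      -- `f` is the minimal polynomial of `a` over `F`:
      (∀ q : Polynomial F, q ≠ 0 → Polynomial.eval₂ F.subtype a q = 0 →
        p.degree ≤ q.degree) ∧
      -- in particular `a` is algebraic over `F`:
      (∃ q : Polynomial F, q ≠ 0 ∧ Polynomial.eval₂ F.subtype a q = 0) := by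
  classical
  letI : Field F := hF.toField
  haveI : CharZero F := ⟨fun m n h => by
    have h2 := congrArg ((IsLocalRing.residue R).comp F.subtype) h
    rw [map_natCast, map_natCast] at h2
    exact Nat.cast_injective h2⟩
  have hpne : p ≠ 0 := hmonic.ne_zero
  -- degree of p is positive
  have hdeg : 0 < p.degree := by
    by_contra h
    push_neg at h
    have : p = 1 := hmonic.degree_le_zero_iff_eq_one.mp h
    rw [this] at hroot
    simp at hroot
  have hderne : Polynomial.derivative p ≠ 0 := by
    intro h
    have := Polynomial.natDegree_eq_zero_of_derivative_eq_zero h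
    rw [Polynomial.natDegree_eq_zero] at this
    obtain ⟨c, rfl⟩ := this
    exact absurd (lt_of_lt_of_le hdeg (Polynomial.degree_C_le)) (by simp)
  -- derivative at α is nonzero
  have hder : Polynomial.eval₂ ((IsLocalRing.residue R).comp F.subtype) α
      (Polynomial.derivative p) ≠ 0 := by
    intro h
    have := hmin _ hderne h
    exact absurd this (not_le.mpr (Polynomial.degree_derivative_lt hpne))
  -- lift α
  obtain ⟨a₀, ha₀⟩ := IsLocalRing.residue_surjective (R := R) α
  set g : Polynomial R := p.map F.subtype with hg
  have hgmonic : g.Monic := hmonic.map _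
  have key : ∀ b : R, ∀ q : Polynomial F, IsLocalRing.residue R (Polynomial.eval₂ F.subtype b q)
      = Polynomial.eval₂ ((IsLocalRing.residue R).comp F.subtype) (IsLocalRing.residue R b) q :=
    fun b q => Polynomial.hom_eval₂ q F.subtype (IsLocalRing.residue R) b
  have h1 : g.eval a₀ ∈ IsLocalRing.maximalIdeal R := by
    rw [← IsLocalRing.residue_eq_zero_iff, hg, Polynomial.eval_map, key, ha₀, hroot]
  have h2 : IsUnit (g.derivative.eval a₀) := by
    by_contra h
    have : g.derivative.eval a₀ ∈ IsLocalRing.maximalIdeal R := h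
    rw [← IsLocalRing.residue_eq_zero_iff, hg, Polynomial.derivative_map,
      Polynomial.eval_map, key, ha₀] at this
    exact hder this
  obtain ⟨a, ha, hamem⟩ := HenselianLocalRing.is_henselian g hgmonic a₀ h1 h2
  have hres : IsLocalRing.residue R a = α := by
    have : IsLocalRing.residue R (a - a₀) = 0 := (IsLocalRing.residue_eq_zero_iff _).mpr hamem
    rw [map_sub, sub_eq_zero] at this
    rw [this, ha₀]
  have heval : Polynomial.eval₂ F.subtype a p = 0 := by
    rw [← Polynomial.eval_map, ← hg]; exact ha
  refine ⟨a, heval, ?_, hres, ?_, ⟨p, hpne, heval⟩⟩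
  · by_contra h
    have : Polynomial.eval₂ F.subtype a (Polynomial.derivative p) ∈
        IsLocalRing.maximalIdeal R := h
    rw [← IsLocalRing.residue_eq_zero_iff, key, hres] at this
    exact hder this
  · intro q hq hq0
    refine hmin q hq ?_
    rw [← hres, ← key, hq0, map_zero]
end

section
/- Let R be a Henselian local ring whose residue field Δ = R/m has characteristic 0, with residue map φ : R → Δ, and let F ⊆ R be a subfield. Then there exists a subfield L of R with F ⊆ L such that φ restricts to a field isomorphism of L onto Δ; equivalently, there exists a ring homomorphism σ : Δ → R with φ∘σ = id_Δ whose image contains F. -/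
open IsLocalRing Polynomial

universe u

/-- Fraction closure: if `A ∩ m = 0`, then `A` is contained in a subfield of `R`. -/
lemma frac_lemma {R : Type u} [CommRing R] [IsLocalRing R] (A : Subring R)
    (hA : ∀ y ∈ A, residue R y = 0 → y = 0) :
    ∃ L' : Subring R, A ≤ L' ∧ IsField L' := by
  have hunit : ∀ y ∈ A, y ≠ 0 → IsUnit y := by
    intro y hy h0
    by_contra hu
    refine h0 (hA y hy ?_)
    have : y ∈ maximalIdeal R := by rwa [mem_maximalIdeal, mem_nonunits_iff]
    exact Ideal.Quotient.eq_zero_iff_mem.mpr this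
  refine ⟨{ carrier := {y | ∃ a ∈ A, ∃ b ∈ A, IsUnit b ∧ y * b = a}
            one_mem' := ⟨1, A.one_mem, 1, A.one_mem, isUnit_one, one_mul 1⟩
            zero_mem' := ⟨0, A.zero_mem, 1, A.one_mem, isUnit_one, zero_mul 1⟩
            mul_mem' := ?_
            add_mem' := ?_
            neg_mem' := ?_ }, ?_, ?_⟩
  · rintro x y ⟨a1, ha1, b1, hb1, hu1, he1⟩ ⟨a2, ha2, b2, hb2, hu2, he2⟩
    exact ⟨a1 * a2, A.mul_mem ha1 ha2, b1 * b2, A.mul_mem hb1 hb2, hu1.mul hu2,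
      by rw [← he1, ← he2]; ring⟩
  · rintro x y ⟨a1, ha1, b1, hb1, hu1, he1⟩ ⟨a2, ha2, b2, hb2, hu2, he2⟩
    exact ⟨a1 * b2 + a2 * b1, A.add_mem (A.mul_mem ha1 hb2) (A.mul_mem ha2 hb1),
      b1 * b2, A.mul_mem hb1 hb2, hu1.mul hu2, by rw [← he1, ← he2]; ring⟩
  · rintro x ⟨a, ha, b, hb, hu, he⟩
    exact ⟨-a, A.neg_mem ha, b, hb, hu, by rw [← he]; ring⟩
  · intro y hy
    exact ⟨y, hy, 1, A.one_mem, isUnit_one, mul_one y⟩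
  · constructor
    · refine ⟨0, 1, fun h => ?_⟩
      exact zero_ne_one (α := R) (congrArg Subtype.val h)
    · exact fun a b => mul_comm a b
    · rintro ⟨z, a, ha, b, hb, hub, he⟩ hz
      have hz0 : z ≠ 0 := fun h => hz (Subtype.ext h)
      have ha0 : a ≠ 0 := by
        rintro rfl
        exact hz0 ((IsUnit.mul_left_eq_zero hub).mp he)
      have hau := hunit a ha ha0
      refine ⟨⟨b * ↑hau.unit⁻¹, b, hb, a, ha, hau, ?_⟩, ?_⟩
      · rw [mul_assoc, IsUnit.val_inv_mul, mul_one]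
      · apply Subtype.ext
        show z * (b * ↑hau.unit⁻¹) = 1
        rw [← mul_assoc, he, IsUnit.mul_val_inv]

/-- The key step: given a subfield `L` of a Henselian local ring and `x` in the residue
field, there is a subring `A ⊇ L` with `A ∩ m = 0` containing a lift of `x`. -/
lemma step_lemma {R : Type u} [CommRing R] [IsLocalRing R] [HenselianLocalRing R]
    [CharZero (IsLocalRing.ResidueField R)]
    (L : Subring R) (hL : IsField L) (x : ResidueField R) :
    ∃ A : Subring R, L ≤ A ∧ (∀ y ∈ A, residue R y = 0 → y = 0) ∧
      ∃ w ∈ A, residue R w = x := by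
  letI : Field L := hL.toField
  set ψ : L →+* ResidueField R := (residue R).comp L.subtype with hψdef
  have hψ0 : ∀ c : L, ψ c = 0 → c = 0 := by
    intro c hc
    by_contra hc0
    obtain ⟨d, hd⟩ := hL.mul_inv_cancel hc0
    have hcu : IsUnit (c : R) := IsUnit.of_mul_eq_one (a := (c : R)) (d : R) (by
      have h2 := congrArg (Subtype.val) hd
      push_cast at h2
      exact h2)
    have : (c : R) ∈ maximalIdeal R := Ideal.Quotient.eq_zero_iff_mem.mp hc
    exact (mem_maximalIdeal _).mp this hcu
  have hψ : Function.Injective ψ := by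
    intro c d h
    have : c - d = 0 := hψ0 _ (by rw [RingHom.map_sub, h, sub_self])
    exact sub_eq_zero.mp this
  letI : Algebra L (ResidueField R) := ψ.toAlgebra
  have halgmap : algebraMap L (ResidueField R) = ψ := rfl
  -- key computation: residue of an evaluated polynomial
  have hres_eval : ∀ (r : R) (p : Polynomial L),
      residue R (eval₂ L.subtype r p) = aeval (residue R r) p := by
    intro r p
    rw [aeval_def, halgmap, hψdef, hom_eval₂]
  by_cases halg : ∃ p : Polynomial L, p ≠ 0 ∧ aeval x p = 0
  · -- algebraic case
    have hint : IsIntegral L x := by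
      obtain ⟨p, hp0, hpx⟩ := halg
      exact (IsAlgebraic.isIntegral ⟨p, hp0, hpx⟩)
    haveI : CharZero L := RingHom.charZero ψ
    set f := minpoly L x with hfdef
    have hmonic : f.Monic := minpoly.monic hint
    have hirr : Irreducible f := minpoly.irreducible hint
    have hsep : f.Separable := hirr.separable
    have hfx : aeval x f = 0 := minpoly.aeval L x
    have hder : aeval x (derivative f) ≠ 0 := by
      obtain ⟨u, v, huv⟩ := hsep
      intro h0
      have := congrArg (aeval x) huv
      simp only [map_add, map_mul, map_one, hfx, h0, mul_zero, add_zero] at this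
      exact zero_ne_one this
    -- lift f to R[X] and apply Hensel
    set g : Polynomial R := f.map L.subtype with hgdef
    have hgmonic : g.Monic := hmonic.map _
    have hgx : aeval x g = 0 := by
      rw [aeval_def, IsLocalRing.ResidueField.algebraMap_eq, hgdef, eval₂_map, ← hψdef,
        ← halgmap, ← aeval_def, hfx]
    have hgx' : aeval x (derivative g) ≠ 0 := by
      rw [hgdef, derivative_map, aeval_def, IsLocalRing.ResidueField.algebraMap_eq,
        eval₂_map, ← hψdef, ← halgmap, ← aeval_def]
      exact hder
    have henselian := ((HenselianLocalRing.TFAE R).out 0 1).mp ‹HenselianLocalRing R›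
    obtain ⟨a, hroot, hares⟩ := henselian g hgmonic x hgx hgx'
    refine ⟨(eval₂RingHom L.subtype a).range, ?_, ?_, ⟨a, ?_, hares⟩⟩
    · intro y hy
      exact ⟨C ⟨y, hy⟩, eval₂_C _ _⟩
    · rintro y ⟨p, rfl⟩ hy0
      have : aeval x p = 0 := by
        rw [coe_eval₂RingHom] at hy0
        rw [← hares, ← hres_eval a p]
        exact hy0
      obtain ⟨h, hh⟩ := minpoly.dvd L x this
      show eval₂ L.subtype a p = 0
      rw [hh, eval₂_mul]
      have : eval₂ L.subtype a f = 0 := by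
        rw [eval₂_eq_eval_map, ← hgdef]
        exact hroot
      rw [← hfdef, this, zero_mul]
    · exact ⟨X, eval₂_X _ _⟩
  · -- transcendental case
    push_neg at halg
    obtain ⟨r, hr⟩ := residue_surjective (R := R) x
    refine ⟨(eval₂RingHom L.subtype r).range, ?_, ?_, ⟨r, ⟨X, eval₂_X _ _⟩, hr⟩⟩
    · intro y hy
      exact ⟨C ⟨y, hy⟩, eval₂_C _ _⟩
    · rintro y ⟨p, rfl⟩ hy0
      rw [coe_eval₂RingHom] at hy0 ⊢
      have hax : aeval x p = 0 := by rw [← hr, ← hres_eval r p]; exact hy0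
      have hp0 : p = 0 := by
        by_contra hp
        exact halg p hp hax
      rw [hp0, eval₂_zero]

/-- Let `R` be a Henselian local ring whose residue field
`Δ = R / m` has characteristic zero, with residue map `φ : R → Δ`, and let `F ⊆ R` be a
subfield.  Then there is a subfield `L` of `R` containing `F` such that `φ` restricts to
a field isomorphism of `L` onto `Δ`; equivalently, there is a ring homomorphism section
`σ : Δ → R` of `φ` whose image contains `F`. -/
theorem statement9 (R : Type u) [CommRing R] [IsLocalRing R] [HenselianLocalRing R]
    [CharZero (IsLocalRing.ResidueField R)]
    (F : Subring R) (hF : IsField F) :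
    (∃ L : Subring R, F ≤ L ∧
      Function.Bijective ((IsLocalRing.residue R).comp L.subtype)) ∧
    (∃ σ : IsLocalRing.ResidueField R →+* R,
      (IsLocalRing.residue R).comp σ = RingHom.id (IsLocalRing.ResidueField R) ∧
      (F : Set R) ⊆ Set.range σ) := by
  -- Zorn's lemma: maximal subfield containing F
  set S : Set (Subring R) := {K | F ≤ K ∧ IsField K} with hSdef
  have hzorn : ∃ L, F ≤ L ∧ Maximal (· ∈ S) L := by
    apply zorn_le_nonempty₀ S ?_ F ⟨le_refl F, hF⟩
    intro c hcS hchain y hyc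
    haveI : Nonempty c := ⟨⟨y, hyc⟩⟩
    have hdir : Directed (· ≤ ·) (fun k : c => (k : Subring R)) :=
      (IsChain.directedOn hchain).directed_val
    set K : Subring R := ⨆ k : c, (k : Subring R) with hKdef
    have hmem : ∀ z : R, z ∈ K ↔ ∃ k : c, z ∈ (k : Subring R) := fun z =>
      Subring.mem_iSup_of_directed hdir
    refine ⟨K, ⟨?_, ?_, fun a b => mul_comm a b, ?_⟩, ?_⟩
    · exact le_trans (hcS hyc).1 (le_iSup (fun k : c => (k : Subring R)) ⟨y, hyc⟩)
    · refine ⟨0, 1, fun h => ?_⟩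
      exact zero_ne_one (α := R) (congrArg Subtype.val h)
    · rintro ⟨z, hz⟩ hz0
      obtain ⟨k, hk⟩ := (hmem z).mp hz
      have hzk0 : (⟨z, hk⟩ : (k : Subring R)) ≠ 0 := by
        intro h
        have hz' : z = 0 := congrArg Subtype.val h
        exact hz0 (Subtype.ext hz')
      obtain ⟨w, hw⟩ := (hcS k.2).2.mul_inv_cancel hzk0
      have hwK : (w : R) ∈ K := (hmem _).mpr ⟨k, w.2⟩
      refine ⟨⟨(w : R), hwK⟩, ?_⟩
      have h2 := congrArg (Subtype.val) hw
      push_cast at h2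
      exact Subtype.ext h2
    · intro z hzc
      exact le_iSup (fun k : c => (k : Subring R)) ⟨z, hzc⟩
  obtain ⟨L, hFL, hLmax⟩ := hzorn
  have hLS : L ∈ S := hLmax.prop
  have hLfield : IsField L := hLS.2
  -- injectivity of residue ∘ subtype on any subfield
  have hinj : Function.Injective ((IsLocalRing.residue R).comp L.subtype) := by
    rw [injective_iff_map_eq_zero]
    intro c hc
    by_contra hc0
    obtain ⟨d, hd⟩ := hLfield.mul_inv_cancel hc0
    have hcu : IsUnit (c : R) := IsUnit.of_mul_eq_one (a := (c : R)) (d : R) (by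
      have h2 := congrArg (Subtype.val) hd
      push_cast at h2
      exact h2)
    have : (c : R) ∈ maximalIdeal R := Ideal.Quotient.eq_zero_iff_mem.mp hc
    exact (mem_maximalIdeal _).mp this hcu
  -- surjectivity via the step lemma and maximality
  have hsurj : Function.Surjective ((IsLocalRing.residue R).comp L.subtype) := by
    intro x
    obtain ⟨A, hLA, hA, w, hwA, hwx⟩ := step_lemma L hLfield x
    obtain ⟨L', hAL', hL'field⟩ := frac_lemma A hA
    have hL'S : L' ∈ S := ⟨le_trans hFL (le_trans hLA hAL'), hL'field⟩
    have hLL' : L ≤ L' := le_trans hLA hAL'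
    have : L' ≤ L := hLmax.2 hL'S hLL'
    exact ⟨⟨w, this (hAL' hwA)⟩, hwx⟩
  have hbij : Function.Bijective ((IsLocalRing.residue R).comp L.subtype) := ⟨hinj, hsurj⟩
  constructor
  · exact ⟨L, hFL, hbij⟩
  · set ρ := (IsLocalRing.residue R).comp L.subtype with hρ
    set e := RingEquiv.ofBijective ρ hbij with he
    refine ⟨L.subtype.comp (e.symm : IsLocalRing.ResidueField R →+* L), ?_, ?_⟩
    · ext x
      show IsLocalRing.residue R ((L.subtype) (e.symm x)) = x
      have : ρ (e.symm x) = x := by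
        have := e.apply_symm_apply x
        rwa [he, RingEquiv.coe_ofBijective] at this
      exact this
    · intro y hy
      have hyL : y ∈ L := hFL hy
      refine ⟨e ⟨y, hyL⟩, ?_⟩
      show (L.subtype) (e.symm (e ⟨y, hyL⟩)) = y
      rw [e.symm_apply_apply]
      rfl
end

section
/- Let R be a discrete valuation ring that is complete with respect to its maximal-ideal-adic topology, let Δ be its residue field, let σ : Δ → R be a ring homomorphism section of the residue map R → Δ, and let θ ∈ R be a uniformizer (an element of the maximal ideal generating it, i.e. of value 1). Then the map Φ : Δ[[t]] → R defined by Φ(Σ_{i≥0} α_i t^i) = Σ_{i≥0} σ(α_i) θ^i (the series converging in the complete ring R) is a ring isomorphism, sending t to θ and each constant power series α ∈ Δ to σ(α). -/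
/-- Let `R` be a complete discrete valuation ring with residue field
`Δ`, `σ : Δ → R` a ring homomorphism section of the residue map, and `θ ∈ R` a
uniformizer.  Then the map `Φ : Δ[[t]] → R`, `Φ (Σ αᵢ tⁱ) = Σ σ(αᵢ) θⁱ` (the series
converging in the complete ring `R`, i.e. `Φ f` is congruent to the partial sums modulo
every power of the maximal ideal), is a ring isomorphism sending `t` to `θ` and each
constant `α` to `σ α`. -/
theorem statement10 (R : Type u) [CommRing R] [IsDomain R] [IsDiscreteValuationRing R]
    [IsAdicComplete (IsLocalRing.maximalIdeal R) R]
    (σ : IsLocalRing.ResidueField R →+* R)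
    (hσ : (IsLocalRing.residue R).comp σ = RingHom.id (IsLocalRing.ResidueField R))
    (θ : R) (hθ : Ideal.span {θ} = IsLocalRing.maximalIdeal R) :
    ∃ Φ : PowerSeries (IsLocalRing.ResidueField R) ≃+* R,
      (∀ (f : PowerSeries (IsLocalRing.ResidueField R)) (N : ℕ),
        Φ f - ∑ i ∈ Finset.range N,
          σ (PowerSeries.coeff (R := IsLocalRing.ResidueField R) i f) * θ ^ i ∈
            IsLocalRing.maximalIdeal R ^ N) ∧
      Φ PowerSeries.X = θ ∧
      (∀ a : IsLocalRing.ResidueField R,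
        Φ (PowerSeries.C (R := IsLocalRing.ResidueField R) a) = σ a) := by
  classical
  have hθm : θ ∈ IsLocalRing.maximalIdeal R := hθ ▸ Ideal.mem_span_singleton_self θ
  have hpow : ∀ N : ℕ, IsLocalRing.maximalIdeal R ^ N = Ideal.span {θ ^ N} := fun N => by
    rw [← hθ, Ideal.span_singleton_pow]
  have hθ0 : θ ≠ 0 := by
    intro h
    exact IsDiscreteValuationRing.not_a_field R (by rw [← hθ, h, Ideal.span_singleton_eq_bot])
  have hres : ∀ a, IsLocalRing.residue R (σ a) = a := fun a => RingHom.congr_fun hσ a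
  set S : PowerSeries (IsLocalRing.ResidueField R) → ℕ → R :=
    fun f N => ∑ i ∈ Finset.range N, σ (PowerSeries.coeff i f) * θ ^ i with hS
  have hS0 : ∀ f, S f 0 = 0 := by
    intro f; simp only [hS]; exact Finset.sum_range_zero _
  have hSsucc : ∀ f N, S f (N + 1) = S f N + σ (PowerSeries.coeff N f) * θ ^ N := by
    intro f N; simp only [hS]; exact Finset.sum_range_succ _ N
  have hSsub : ∀ f M N, M ≤ N → S f N - S f M ∈ IsLocalRing.maximalIdeal R ^ M := by
    intro f M N hMN
    have heq : S f N - S f M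
        = ∑ i ∈ Finset.Ico M N, σ (PowerSeries.coeff i f) * θ ^ i := by
      simp only [hS]
      rw [Finset.range_eq_Ico, ← Finset.sum_Ico_consecutive _ (Nat.zero_le M) hMN,
        ← Finset.range_eq_Ico]
      ring
    rw [heq]
    refine Ideal.sum_mem _ fun i hi => Ideal.mul_mem_left _ _ ?_
    exact Ideal.pow_le_pow_right (Finset.mem_Ico.mp hi).1 (Ideal.pow_mem_pow hθm i)
  have hex : ∀ f, ∃ L, ∀ N, S f N - L ∈ IsLocalRing.maximalIdeal R ^ N := by
    intro f
    obtain ⟨L, hL⟩ := IsPrecomplete.prec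
      (IsAdicComplete.toIsPrecomplete : IsPrecomplete (IsLocalRing.maximalIdeal R) R)
      (f := S f) (fun {a b} hab => by
        rw [SModEq.sub_mem, smul_eq_mul, Ideal.mul_top, ← neg_sub]
        exact neg_mem (hSsub f a b hab))
    refine ⟨L, fun N => ?_⟩
    have h := hL N
    rwa [SModEq.sub_mem, smul_eq_mul, Ideal.mul_top] at h
  choose Φ0 hΦ0 using hex
  have huniq : ∀ f x, (∀ N, S f N - x ∈ IsLocalRing.maximalIdeal R ^ N) → Φ0 f = x := by
    intro f x hx
    have h : Φ0 f - x = 0 := by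
      refine IsHausdorff.haus
        (IsAdicComplete.toIsHausdorff : IsHausdorff (IsLocalRing.maximalIdeal R) R) _ fun N => ?_
      rw [SModEq.sub_mem, smul_eq_mul, Ideal.mul_top, sub_zero]
      have h3 : Φ0 f - x = (S f N - x) - (S f N - Φ0 f) := by ring
      rw [h3]
      exact sub_mem (hx N) (hΦ0 f N)
    exact sub_eq_zero.mp h
  -- ring homomorphism properties
  have hzero : Φ0 0 = 0 := by
    apply huniq
    intro N
    have : S 0 N = 0 := by
      simp only [hS]
      exact Finset.sum_eq_zero fun i _ => by rw [map_zero, map_zero, zero_mul]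
    rw [this, sub_zero]
    exact Submodule.zero_mem _
  have hone : Φ0 1 = 1 := by
    apply huniq
    intro N
    match N with
    | 0 => rw [pow_zero, Ideal.one_eq_top]; exact Submodule.mem_top
    | (N + 1) =>
      have h1 : S 1 (N + 1) = 1 := by
        simp only [hS]
        rw [Finset.sum_eq_single 0]
        · simp
        · intro i _ hi
          rw [PowerSeries.coeff_one, if_neg hi, map_zero, zero_mul]
        · intro h; exact absurd (Finset.mem_range.mpr (Nat.succ_pos N)) h
      rw [h1, sub_self]
      exact Submodule.zero_mem _
  have hadd : ∀ f g, Φ0 (f + g) = Φ0 f + Φ0 g := by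
    intro f g
    apply huniq
    intro N
    have hSadd : S (f + g) N = S f N + S g N := by
      simp only [hS, map_add, add_mul]
      exact Finset.sum_add_distrib
    have h3 : S (f + g) N - (Φ0 f + Φ0 g)
        = (S f N - Φ0 f) + (S g N - Φ0 g) := by rw [hSadd]; ring
    rw [h3]
    exact add_mem (hΦ0 f N) (hΦ0 g N)
  have hSeval : ∀ f N, S f (N + 1) = Polynomial.eval₂ σ θ (PowerSeries.trunc (N + 1) f) := by
    intro f N
    rw [Polynomial.eval₂_eq_sum_range' σ (PowerSeries.natDegree_trunc_lt f N) θ]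
    simp only [hS]
    refine Finset.sum_congr rfl fun i hi => ?_
    rw [PowerSeries.coeff_trunc, if_pos (Finset.mem_range.mp hi)]
  have hSmul : ∀ f g N, S (f * g) N - S f N * S g N ∈ IsLocalRing.maximalIdeal R ^ N := by
    intro f g N
    match N with
    | 0 => rw [pow_zero, Ideal.one_eq_top]; exact Submodule.mem_top
    | (n + 1) =>
      have key : (Polynomial.X : Polynomial (IsLocalRing.ResidueField R)) ^ (n + 1) ∣
          (PowerSeries.trunc (n + 1) f * PowerSeries.trunc (n + 1) g
            - PowerSeries.trunc (n + 1) (f * g)) := by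
        rw [Polynomial.X_pow_dvd_iff]
        intro d hd
        rw [Polynomial.coeff_sub, sub_eq_zero]
        calc (PowerSeries.trunc (n + 1) f * PowerSeries.trunc (n + 1) g).coeff d
            = (PowerSeries.coeff d) ((PowerSeries.trunc (n + 1) f : PowerSeries _)
                * (PowerSeries.trunc (n + 1) g : PowerSeries _)) := by
              rw [← Polynomial.coe_mul, Polynomial.coeff_coe]
          _ = (PowerSeries.trunc (n + 1) ((PowerSeries.trunc (n + 1) f : PowerSeries _)
                * (PowerSeries.trunc (n + 1) g : PowerSeries _))).coeff d := by
              rw [PowerSeries.coeff_trunc, if_pos hd]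
          _ = (PowerSeries.trunc (n + 1) (f * g)).coeff d := by
              rw [PowerSeries.trunc_trunc_mul_trunc]
      obtain ⟨Q, hQ⟩ := key
      have h3 : S (f * g) (n + 1) - S f (n + 1) * S g (n + 1)
          = - Polynomial.eval₂ σ θ (PowerSeries.trunc (n + 1) f * PowerSeries.trunc (n + 1) g
              - PowerSeries.trunc (n + 1) (f * g)) := by
        rw [hSeval, hSeval, hSeval, Polynomial.eval₂_sub, Polynomial.eval₂_mul]
        ring
      rw [h3, hQ, Polynomial.eval₂_mul, Polynomial.eval₂_X_pow, hpow]
      exact neg_mem (Ideal.mem_span_singleton.mpr ⟨_, rfl⟩)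
  have hmul : ∀ f g, Φ0 (f * g) = Φ0 f * Φ0 g := by
    intro f g
    apply huniq
    intro N
    have h3 : S (f * g) N - Φ0 f * Φ0 g =
        (S (f * g) N - S f N * S g N) + (S f N - Φ0 f) * S g N + Φ0 f * (S g N - Φ0 g) := by
      ring
    rw [h3]
    exact add_mem (add_mem (hSmul f g N) (Ideal.mul_mem_right _ _ (hΦ0 f N)))
      (Ideal.mul_mem_left _ _ (hΦ0 g N))
  -- surjectivity
  have hstep : ∀ r : R, ∃ c, r - σ (IsLocalRing.residue R r) = θ * c := by
    intro r
    have hr0 : IsLocalRing.residue R (r - σ (IsLocalRing.residue R r)) = 0 := by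
      rw [map_sub, hres, sub_self]
    have hmem : r - σ (IsLocalRing.residue R r) ∈ IsLocalRing.maximalIdeal R :=
      Ideal.Quotient.eq_zero_iff_mem.mp hr0
    rw [← hθ, Ideal.mem_span_singleton] at hmem
    exact hmem
  choose nxt hnxt using hstep
  have hsurj : Function.Surjective Φ0 := by
    intro x
    set r : ℕ → R := fun n => nxt^[n] x with hr
    set f : PowerSeries (IsLocalRing.ResidueField R) :=
      PowerSeries.mk fun n => IsLocalRing.residue R (r n) with hf
    refine ⟨f, huniq f x ?_⟩
    have hxS : ∀ N, x - S f N = θ ^ N * r N := by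
      intro N
      induction N with
      | zero => simp [hS0, hr]
      | succ N ih =>
        rw [hSsucc, hf, PowerSeries.coeff_mk]
        have h1 : r (N + 1) = nxt (r N) := Function.iterate_succ_apply' nxt N x
        calc x - (S f N + σ (IsLocalRing.residue R (r N)) * θ ^ N)
            = (x - S f N) - σ (IsLocalRing.residue R (r N)) * θ ^ N := by ring
          _ = θ ^ N * r N - σ (IsLocalRing.residue R (r N)) * θ ^ N := by rw [ih]
          _ = θ ^ N * (r N - σ (IsLocalRing.residue R (r N))) := by ring
          _ = θ ^ N * (θ * nxt (r N)) := by rw [hnxt]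
          _ = θ ^ (N + 1) * r (N + 1) := by rw [h1]; ring
    intro N
    have h3 : S f N - x = -(x - S f N) := by ring
    rw [h3, hxS N, hpow]
    exact neg_mem (Ideal.mem_span_singleton.mpr (dvd_mul_right _ _))
  -- injectivity
  have hinj0 : ∀ f, Φ0 f = 0 → f = 0 := by
    intro f h0
    have key : ∀ k, PowerSeries.coeff k f = 0 := by
      intro k
      induction k using Nat.strong_induction_on with
      | _ k ih =>
        have h1 : S f (k + 1) ∈ Ideal.span {θ ^ (k + 1)} := by
          have h := hΦ0 f (k + 1)
          rwa [h0, sub_zero, hpow] at h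
        have h2 : S f (k + 1) = σ (PowerSeries.coeff k f) * θ ^ k := by
          rw [hSsucc]
          have hz : S f k = 0 := by
            simp only [hS]
            exact Finset.sum_eq_zero fun i hi => by
              rw [ih i (Finset.mem_range.mp hi), map_zero, zero_mul]
          rw [hz, zero_add]
        rw [h2] at h1
        obtain ⟨c, hc⟩ := Ideal.mem_span_singleton.mp h1
        have hcan : σ (PowerSeries.coeff k f) = θ * c := by
          refine mul_left_cancel₀ (pow_ne_zero k hθ0) ?_
          calc θ ^ k * σ (PowerSeries.coeff k f)
              = σ (PowerSeries.coeff k f) * θ ^ k := mul_comm _ _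
            _ = θ ^ (k + 1) * c := hc
            _ = θ ^ k * (θ * c) := by ring
        have h4 := hres (PowerSeries.coeff k f)
        have hθr : IsLocalRing.residue R θ = 0 := Ideal.Quotient.eq_zero_iff_mem.mpr hθm
        rw [hcan, map_mul, hθr, zero_mul] at h4
        exact h4.symm
    exact PowerSeries.ext fun k => by rw [key k, map_zero]
  let Φhom : PowerSeries (IsLocalRing.ResidueField R) →+* R :=
    { toFun := Φ0, map_one' := hone, map_mul' := hmul, map_zero' := hzero, map_add' := hadd }
  have hbij : Function.Bijective Φhom :=
    ⟨(injective_iff_map_eq_zero Φhom).mpr hinj0, hsurj⟩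
  refine ⟨RingEquiv.ofBijective Φhom hbij, ?_, ?_, ?_⟩
  · intro f N
    have h := hΦ0 f N
    have h2 : Φ0 f - S f N = -(S f N - Φ0 f) := by ring
    show Φ0 f - S f N ∈ _
    rw [h2]
    exact neg_mem h
  · show Φ0 PowerSeries.X = θ
    apply huniq
    intro N
    match N with
    | 0 => rw [pow_zero, Ideal.one_eq_top]; exact Submodule.mem_top
    | 1 =>
      have h1 : S PowerSeries.X 1 = 0 := by
        rw [hSsucc, hS0, PowerSeries.coeff_zero_X, map_zero, zero_mul, zero_add]
      rw [h1, zero_sub, pow_one]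
      exact neg_mem hθm
    | (N + 2) =>
      have h1 : S PowerSeries.X (N + 2) = θ := by
        simp only [hS]
        rw [Finset.sum_eq_single 1]
        · rw [PowerSeries.coeff_one_X, map_one, one_mul, pow_one]
        · intro i _ hi
          rw [PowerSeries.coeff_X, if_neg hi, map_zero, zero_mul]
        · intro h; exact absurd (Finset.mem_range.mpr (by omega)) h
      rw [h1, sub_self]
      exact Submodule.zero_mem _
  · intro a
    show Φ0 (PowerSeries.C a) = σ a
    apply huniq
    intro N
    match N with
    | 0 => rw [pow_zero, Ideal.one_eq_top]; exact Submodule.mem_top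
    | (N + 1) =>
      have h1 : S (PowerSeries.C a) (N + 1) = σ a := by
        simp only [hS]
        rw [Finset.sum_eq_single 0]
        · rw [PowerSeries.coeff_zero_C, pow_zero, mul_one]
        · intro i _ hi
          rw [PowerSeries.coeff_C, if_neg hi, map_zero, zero_mul]
        · intro h; exact absurd (Finset.mem_range.mpr (Nat.succ_pos N)) h
      rw [h1, sub_self]
      exact Submodule.zero_mem _
end

section
/- Let n ≥ 2 and let v be a rank-one discrete valuation of K_n|k centered at the maximal ideal M_n. Then the dimension of v is at least 1: there exists f ∈ K_n with v(f) = 0 whose residue f + m_v in the residue field Δ_v is transcendental over k. -/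
set_option linter.unusedSectionVars false
set_option linter.unusedVariables false
set_option maxHeartbeats 1000000
set_option synthInstance.maxHeartbeats 400000


/-- `R_n = k[[X_1, …, X_n]]`. -/
abbrev Rn (k : Type u) [Field k] (n : ℕ) := MvPowerSeries (Fin n) k

/-- `K_n = k((X_1, …, X_n))`, the quotient field of `R_n`. -/
abbrev Kn (k : Type u) [Field k] (n : ℕ) := FractionRing (Rn k n)

/-- The canonical map `R_n → K_n`. -/
noncomputable abbrev toKn (k : Type u) [Field k] (n : ℕ) : Rn k n →+* Kn k n :=
  algebraMap (Rn k n) (Kn k n)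

/-- The canonical map `k → K_n`. -/
noncomputable abbrev cstKn (k : Type u) [Field k] (n : ℕ) : k →+* Kn k n :=
  (toKn k n).comp (algebraMap k (Rn k n))



section ValHelpers

variable {K : Type*} [Field K] (v : K → ℤ)

section basic
variable (hmul : ∀ x y : K, x ≠ 0 → y ≠ 0 → v (x * y) = v x + v y)
variable (hmin : ∀ x y : K, x ≠ 0 → y ≠ 0 → x + y ≠ 0 → min (v x) (v y) ≤ v (x + y))

include hmul

theorem v_one : v 1 = 0 := by
  have := hmul 1 1 one_ne_zero one_ne_zero
  simp at this; omega

theorem v_neg_one : v (-1) = 0 := by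
  have := hmul (-1) (-1) (by norm_num) (by norm_num)
  simp at this
  rw [v_one v hmul] at this; omega

theorem v_neg (z : K) (hz : z ≠ 0) : v (-z) = v z := by
  have h : (-z) = (-1) * z := by ring
  rw [h, hmul _ _ (by norm_num) hz, v_neg_one v hmul]; omega

theorem v_pow (z : K) (hz : z ≠ 0) (m : ℕ) : v (z ^ m) = m * v z := by
  induction m with
  | zero => simpa using v_one v hmul
  | succ m ih =>
    rw [pow_succ, hmul _ _ (pow_ne_zero _ hz) hz, ih]; push_cast; ring

theorem v_inv (z : K) (hz : z ≠ 0) : v z⁻¹ = - v z := by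
  have := hmul z z⁻¹ hz (inv_ne_zero hz)
  rw [mul_inv_cancel₀ hz, v_one v hmul] at this; omega

omit hmul
include hmin

/-- lax min bound for sums allowing zero summands -/
theorem v_add_ge {m : ℤ} {x y : K} (hx : x = 0 ∨ m ≤ v x) (hy : y = 0 ∨ m ≤ v y)
    (hxy : x + y ≠ 0) : m ≤ v (x + y) := by
  by_cases hx0 : x = 0
  · rcases hy with hy | hy
    · exact absurd (by rw [hx0, hy, add_zero]) hxy
    · simpa [hx0] using hy
  · by_cases hy0 : y = 0
    · rcases hx with hx | hx
      · exact absurd hx hx0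
      · simpa [hy0] using hx
    · rcases hx with hx | hx; · exact absurd hx hx0
      rcases hy with hy | hy; · exact absurd hy hy0
      have := hmin x y hx0 hy0 hxy
      omega

theorem v_sum_ge {ι : Type*} {m : ℤ} (s : Finset ι) (f : ι → K)
    (h : ∀ i ∈ s, f i = 0 ∨ m ≤ v (f i)) :
    (∑ i ∈ s, f i) = 0 ∨ m ≤ v (∑ i ∈ s, f i) := by
  classical
  induction s using Finset.induction_on with
  | empty => simp
  | @insert a s hnot ih =>
    rw [Finset.sum_insert hnot]
    by_cases hz : f a + ∑ i ∈ s, f i = 0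
    · exact Or.inl hz
    · refine Or.inr (v_add_ge v hmin (h a (Finset.mem_insert_self a s)) ?_ hz)
      exact ih fun i hi => h i (Finset.mem_insert_of_mem hi)

include hmul

/-- strict triangle equality -/
theorem v_add_eq {x y : K} (hx : x ≠ 0) (hy : y ≠ 0) (hlt : v x < v y) :
    x + y ≠ 0 ∧ v (x + y) = v x := by
  have hne : x + y ≠ 0 := by
    intro h
    have hyx : y = -x := by linear_combination h
    rw [hyx, v_neg v hmul x hx] at hlt; omega
  refine ⟨hne, ?_⟩
  have h1 := hmin x y hx hy hne
  have hxe : x = (x + y) + (-y) := by ring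
  have h2 := hmin (x+y) (-y) hne (neg_ne_zero.mpr hy) (by rw [← hxe]; exact hx)
  rw [← hxe, v_neg v hmul y hy] at h2
  omega

end basic
end ValHelpers

section Core

variable {k : Type u} [Field k] {K : Type v} [Field K]

open Classical in
/-- pick the next expansion coefficient -/
noncomputable def nextC (v : K → ℤ) (cst : k →+* K) (π : K) (d : ℤ) (r : K) (j : ℕ) : k :=
  if h : ∃ c : k, c ≠ 0 ∧ (r = cst c * π ^ j ∨ (j : ℤ) * d < v (r - cst c * π ^ j)) then
    h.choose
  else 0

/-- the expansion coefficients of `z` in powers of `π` -/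
noncomputable def Acoef (v : K → ℤ) (cst : k →+* K) (π : K) (d : ℤ) (z : K) : ℕ → k
  | j => nextC v cst π d
      (z - ∑ i ∈ (Finset.range j).attach, cst (Acoef v cst π d z i.1) * π ^ (i.1 : ℕ)) j
  decreasing_by exact Finset.mem_range.mp i.2

/-- the `j`-th remainder -/
noncomputable def remT (v : K → ℤ) (cst : k →+* K) (π : K) (d : ℤ) (z : K) (j : ℕ) : K :=
  z - ∑ i ∈ Finset.range j, cst (Acoef v cst π d z i) * π ^ i

/-- bundled hypotheses -/
structure VS (v : K → ℤ) (cst : k →+* K) (π : K) (d : ℤ) : Prop where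
  hmul : ∀ x y : K, x ≠ 0 → y ≠ 0 → v (x * y) = v x + v y
  hmin : ∀ x y : K, x ≠ 0 → y ≠ 0 → x + y ≠ 0 → min (v x) (v y) ≤ v (x + y)
  hcst : ∀ c : k, c ≠ 0 → v (cst c) = 0
  hπ : π ≠ 0
  hd : 0 < d
  hvπ : v π = d
  hdvd : ∀ z : K, z ≠ 0 → d ∣ v z
  hres : ∀ z : K, z ≠ 0 → v z = 0 → ∃ c : k, c ≠ 0 ∧ (z = cst c ∨ 0 < v (z - cst c))

variable {v : K → ℤ} {cst : k →+* K} {π : K} {d : ℤ}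

theorem Acoef_eq (z : K) (j : ℕ) :
    Acoef v cst π d z j = nextC v cst π d (remT v cst π d z j) j := by
  rw [Acoef, remT, Finset.sum_attach (Finset.range j) (fun i => cst (Acoef v cst π d z i) * π ^ i)]

theorem remT_zero (z : K) : remT v cst π d z 0 = z := by simp [remT]

theorem remT_succ (z : K) (j : ℕ) :
    remT v cst π d z (j+1) = remT v cst π d z j - cst (Acoef v cst π d z j) * π ^ j := by
  rw [remT, remT, Finset.sum_range_succ]; ring

namespace VS

variable (H : VS v cst π d)
include H

theorem cstinj {c : k} (hc : c ≠ 0) : cst c ≠ 0 := fun h => hc (cst.injective (h.trans (map_zero cst).symm))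

theorem v_cpi {c : k} (hc : c ≠ 0) (j : ℕ) : cst c * π ^ j ≠ 0 ∧ v (cst c * π ^ j) = j * d := by
  have hc0 : cst c ≠ 0 := H.cstinj hc
  have hp0 : π ^ j ≠ 0 := pow_ne_zero _ H.hπ
  refine ⟨mul_ne_zero hc0 hp0, ?_⟩
  rw [H.hmul _ _ hc0 hp0, H.hcst c hc, v_pow v H.hmul π H.hπ j, H.hvπ]; ring

/-- value of a finite combination `∑ c_j π^j` with least nonzero index `j0` -/
theorem v_combo (c : ℕ → k) (N j0 : ℕ) (hj0 : j0 ≤ N) (hc : c j0 ≠ 0)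
    (hlow : ∀ j < j0, c j = 0) :
    (∑ j ∈ Finset.range (N+1), cst (c j) * π ^ j) ≠ 0 ∧
      v (∑ j ∈ Finset.range (N+1), cst (c j) * π ^ j) = j0 * d := by
  classical
  have hsplit : (Finset.range (N+1) : Finset ℕ) = insert j0 ((Finset.range (N+1)).erase j0) :=
    (Finset.insert_erase (Finset.mem_range.mpr (by omega))).symm
  rw [hsplit, Finset.sum_insert (Finset.notMem_erase _ _)]
  set T := ∑ j ∈ (Finset.range (N+1)).erase j0, cst (c j) * π ^ j with hT
  obtain ⟨hb0, hbv⟩ := H.v_cpi hc j0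
  by_cases hT0 : T = 0
  · rw [hT0, add_zero]; exact ⟨hb0, hbv⟩
  · have hTge : ((j0 : ℤ) + 1) * d ≤ v T := by
      refine ((v_sum_ge v H.hmin _ _ fun j hj => ?_).resolve_left hT0)
      by_cases hcj : c j = 0
      · left; simp [hcj]
      · right
        obtain ⟨h0, hv⟩ := H.v_cpi hcj j
        rw [hv]
        simp only [Finset.mem_erase, Finset.mem_range] at hj
        have hj1 : j0 + 1 ≤ j := by
          rcases Nat.lt_or_ge j (j0+1) with h | h
          · exfalso
            by_cases hjj : j = j0
            · exact hj.1 hjj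
            · exact hcj (hlow j (by omega))
          · exact h
        have : (j0 + 1 : ℤ) ≤ (j : ℤ) := by exact_mod_cast hj1
        nlinarith [H.hd]
    have := v_add_eq v H.hmul H.hmin hb0 hT0 (by rw [hbv]; nlinarith [H.hd])
    exact ⟨this.1, by rw [this.2, hbv]⟩

theorem rem_dvd_step {r : K} {j : ℕ} (hr : r ≠ 0) (h : (j:ℤ) * d < v r) :
    ((j:ℤ)+1) * d ≤ v r := by
  obtain ⟨e, he⟩ := H.hdvd r hr
  have h2 : d ∣ v r - (j:ℤ)*d := ⟨e - j, by rw [he]; ring⟩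
  have := Int.le_of_dvd (by omega) h2
  nlinarith

omit H in
theorem nextC_spec {r : K} {j : ℕ}
    (h : ∃ c : k, c ≠ 0 ∧ (r = cst c * π ^ j ∨ (j : ℤ) * d < v (r - cst c * π ^ j))) :
    nextC v cst π d r j ≠ 0 ∧
      (r = cst (nextC v cst π d r j) * π ^ j ∨
        (j : ℤ) * d < v (r - cst (nextC v cst π d r j) * π ^ j)) := by
  rw [nextC, dif_pos h]
  exact h.choose_spec

theorem nextC_eq_zero {r : K} {j : ℕ}
    (hr : r = 0 ∨ (r ≠ 0 ∧ (j:ℤ) * d < v r)) : nextC v cst π d r j = 0 := by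
  rw [nextC, dif_neg]
  rintro ⟨c, hc, hcase⟩
  obtain ⟨hb0, hbv⟩ := H.v_cpi hc j
  rcases hr with hr | ⟨hr, hvr⟩
  · subst hr
    rcases hcase with h | h
    · exact hb0 h.symm
    · rw [zero_sub, v_neg v H.hmul _ hb0, hbv] at h; omega
  · rcases hcase with h | h
    · rw [h, hbv] at hvr; omega
    · have heq : r - cst c * π ^ j = (-(cst c * π ^ j)) + r := by ring
      have hv2 := v_add_eq v H.hmul H.hmin (x := -(cst c * π ^ j)) (y := r)
        (neg_ne_zero.mpr hb0) hr (by rw [v_neg v H.hmul _ hb0, hbv]; exact hvr)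
      rw [heq, hv2.2, v_neg v H.hmul _ hb0, hbv] at h
      omega

theorem nextC_exists {r : K} {j : ℕ} (hr : r ≠ 0) (hvr : v r = (j:ℤ) * d) :
    ∃ c : k, c ≠ 0 ∧ (r = cst c * π ^ j ∨ (j : ℤ) * d < v (r - cst c * π ^ j)) := by
  have hp0 : π ^ j ≠ 0 := pow_ne_zero _ H.hπ
  set z := r * (π ^ j)⁻¹ with hz
  have hz0 : z ≠ 0 := mul_ne_zero hr (inv_ne_zero hp0)
  have hvz : v z = 0 := by
    rw [hz, H.hmul _ _ hr (inv_ne_zero hp0), v_inv v H.hmul _ hp0, v_pow v H.hmul _ H.hπ, hvr,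
      H.hvπ]
    ring
  obtain ⟨c, hc, hcase⟩ := H.hres z hz0 hvz
  refine ⟨c, hc, ?_⟩
  have hrz : r = z * π ^ j := by rw [hz, inv_mul_cancel_right₀ hp0]
  by_cases hzc : z = cst c
  · left; rw [hrz, hzc]
  · right
    have hd0 : z - cst c ≠ 0 := sub_ne_zero_of_ne hzc
    have hv : 0 < v (z - cst c) := by
      rcases hcase with h | h
      · exact absurd h hzc
      · exact h
    have heq : r - cst c * π ^ j = (z - cst c) * π ^ j := by rw [hrz]; ring
    rw [heq, H.hmul _ _ hd0 hp0, v_pow v H.hmul _ H.hπ, H.hvπ]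
    omega

theorem remT_inv {z : K} (hz : z = 0 ∨ 0 ≤ v z) (j : ℕ) :
    remT v cst π d z j ≠ 0 → (j:ℤ) * d ≤ v (remT v cst π d z j) := by
  induction j with
  | zero =>
    intro h0
    rw [remT_zero] at h0 ⊢
    rcases hz with hz | hz
    · exact absurd hz h0
    · simpa using hz
  | succ j ih =>
    intro h0
    by_cases hrj : remT v cst π d z j = 0
    · exfalso
      have hA : Acoef v cst π d z j = 0 := by
        rw [Acoef_eq, H.nextC_eq_zero (Or.inl hrj)]
      rw [remT_succ, hrj, hA] at h0
      exact h0 (by simp)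
    · have hge := ih hrj
      rcases lt_or_eq_of_le hge with hgt | heq
      · have hA : Acoef v cst π d z j = 0 := by
          rw [Acoef_eq, H.nextC_eq_zero (Or.inr ⟨hrj, hgt⟩)]
        rw [remT_succ, hA] at h0 ⊢
        simp only [map_zero, zero_mul, sub_zero] at h0 ⊢
        have := H.rem_dvd_step hrj hgt
        push_cast
        linarith
      · obtain ⟨hcne, hcase⟩ := nextC_spec (H.nextC_exists hrj heq.symm)
        rw [remT_succ] at h0 ⊢
        rw [← Acoef_eq] at hcase
        rcases hcase with h | h
        · exact absurd (by rw [h]; ring) h0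
        · have := H.rem_dvd_step h0 h
          push_cast
          linarith

theorem remT_of_zero (j : ℕ) : remT v cst π d (0 : K) j = 0 ∧ Acoef v cst π d (0:K) j = 0 := by
  induction j with
  | zero =>
    refine ⟨remT_zero 0, ?_⟩
    rw [Acoef_eq, remT_zero, H.nextC_eq_zero (Or.inl rfl)]
  | succ j ih =>
    have hr : remT v cst π d (0:K) (j+1) = 0 := by
      rw [remT_succ, ih.1, ih.2]; simp
    refine ⟨hr, ?_⟩
    rw [Acoef_eq, hr, H.nextC_eq_zero (Or.inl rfl)]

/-- uniqueness of expansions -/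
theorem Acoef_unique {z : K} (hz : z = 0 ∨ 0 ≤ v z) (b : ℕ → k) (N : ℕ)
    (happ : z = (∑ j ∈ Finset.range (N+1), cst (b j) * π ^ j) ∨
      ((z - ∑ j ∈ Finset.range (N+1), cst (b j) * π ^ j) ≠ 0 ∧
        (N:ℤ) * d < v (z - ∑ j ∈ Finset.range (N+1), cst (b j) * π ^ j))) :
    ∀ j ≤ N, Acoef v cst π d z j = b j := by
  classical
  set S := ∑ j ∈ Finset.range (N+1), cst (b j) * π ^ j with hS
  set R := remT v cst π d z (N+1) with hR
  have hDval : S - (z - R) = 0 ∨ (N:ℤ)*d < v (S - (z - R)) := by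
    have h1 : (z - S) = 0 ∨ ((z - S) ≠ 0 ∧ (N:ℤ)*d < v (z - S)) := by
      rcases happ with h | h
      · left; rw [h]; ring
      · right; exact h
    have h2 : R = 0 ∨ (N:ℤ)*d < v R := by
      by_cases h0 : R = 0
      · exact Or.inl h0
      · right
        have := H.remT_inv hz (N+1) h0
        rw [← hR] at this
        push_cast at this
        nlinarith [H.hd]
    have heq : S - (z - R) = R + (-(z - S)) := by ring
    by_cases hD : S - (z - R) = 0
    · exact Or.inl hD
    · right
      rw [heq]
      refine lt_of_lt_of_le (lt_add_one _) (v_add_ge v H.hmin ?_ ?_ (by rw [← heq]; exact hD))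
      · rcases h2 with h | h; · exact Or.inl h
        · right; omega
      · rcases h1 with h | h
        · left; rw [h]; ring
        · right
          rw [v_neg v H.hmul _ h.1]
          omega
  have hDsum : S - (z - R) = ∑ j ∈ Finset.range (N+1), cst (b j - Acoef v cst π d z j) * π ^ j := by
    rw [hS, hR, remT, sub_sub_cancel, ← Finset.sum_sub_distrib]
    congr 1; ext j
    rw [map_sub]; ring
  intro j hj
  by_contra hne
  have hex : ∃ i, b i - Acoef v cst π d z i ≠ 0 :=
    ⟨j, sub_ne_zero_of_ne (Ne.symm hne)⟩
  set j0 := Nat.find hex with hj0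
  have hj0N : j0 ≤ N := le_trans (Nat.find_min' hex (sub_ne_zero_of_ne (Ne.symm hne))) hj
  have hcombo := H.v_combo
    (fun i => b i - Acoef v cst π d z i) N j0 hj0N (Nat.find_spec hex)
    (fun i hi => not_not.mp (Nat.find_min hex hi))
  rw [← hDsum] at hcombo
  rcases hDval with h | h
  · exact hcombo.1 h
  · rw [hcombo.2] at h
    have : (j0:ℤ) ≤ (N:ℤ) := by exact_mod_cast hj0N
    nlinarith [H.hd]

end VS
end Core

section Core2
variable {k : Type u} [Field k] {K : Type v} [Field K]
variable {v : K → ℤ} {cst : k →+* K} {π : K} {d : ℤ}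

/-- reindexing double antidiagonal sums -/
theorem sum_antidiag_filter {M : Type w} [AddCommMonoid M] (g : ℕ → ℕ → M) (N : ℕ) :
    ∑ i ∈ Finset.range (N+1), ∑ p ∈ Finset.HasAntidiagonal.antidiagonal i, g p.1 p.2
      = ∑ p ∈ (Finset.range (N+1) ×ˢ Finset.range (N+1)).filter (fun p => p.1 + p.2 ≤ N),
          g p.1 p.2 := by
  classical
  have hset : ((Finset.range (N+1)).biUnion Finset.HasAntidiagonal.antidiagonal)
      = (Finset.range (N+1) ×ˢ Finset.range (N+1)).filter (fun p => p.1 + p.2 ≤ N) := by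
    ext ⟨a, b⟩
    simp only [Finset.mem_biUnion, Finset.mem_range, Finset.HasAntidiagonal.mem_antidiagonal, Finset.mem_filter,
      Finset.mem_product]
    constructor
    · rintro ⟨i, hi, hab⟩; omega
    · rintro ⟨⟨ha, hb⟩, hab⟩; exact ⟨a + b, by omega, rfl⟩
  have hdisj : Set.PairwiseDisjoint ↑(Finset.range (N+1)) (Finset.HasAntidiagonal.antidiagonal : ℕ → Finset (ℕ × ℕ)) := by
    intro i _ j _ hij
    simp only [Function.onFun]
    rw [Finset.disjoint_left]
    intro p hp hq
    rw [Finset.HasAntidiagonal.mem_antidiagonal] at hp hq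
    exact hij (hp ▸ hq)
  rw [← hset, Finset.sum_biUnion hdisj]

namespace VS
variable (H : VS v cst π d)
include H

theorem guard_sum {ι : Type w} (s : Finset ι) (f : ι → K)
    (h : ∀ i ∈ s, f i = 0 ∨ 0 ≤ v (f i)) :
    (∑ i ∈ s, f i) = 0 ∨ 0 ≤ v (∑ i ∈ s, f i) :=
  v_sum_ge v H.hmin s f h

theorem guard_add {z z' : K} (hz : z = 0 ∨ 0 ≤ v z) (hz' : z' = 0 ∨ 0 ≤ v z') :
    z + z' = 0 ∨ 0 ≤ v (z + z') := by
  by_cases h : z + z' = 0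
  · exact Or.inl h
  · exact Or.inr (v_add_ge v H.hmin hz hz' h)

theorem guard_mul {z z' : K} (hz : z = 0 ∨ 0 ≤ v z) (hz' : z' = 0 ∨ 0 ≤ v z') :
    z * z' = 0 ∨ 0 ≤ v (z * z') := by
  rcases hz with hz | hz
  · left; rw [hz, zero_mul]
  · rcases hz' with hz' | hz'
    · left; rw [hz', mul_zero]
    · by_cases h : z = 0
      · left; rw [h, zero_mul]
      · by_cases h' : z' = 0
        · left; rw [h', mul_zero]
        · right; rw [H.hmul _ _ h h']; omega

theorem rem_high {z : K} (hz : z = 0 ∨ 0 ≤ v z) (N : ℕ) :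
    remT v cst π d z (N+1) = 0 ∨
      (remT v cst π d z (N+1) ≠ 0 ∧ (N:ℤ) * d + 1 ≤ v (remT v cst π d z (N+1))) := by
  by_cases h : remT v cst π d z (N+1) = 0
  · exact Or.inl h
  · refine Or.inr ⟨h, ?_⟩
    have := H.remT_inv hz (N+1) h
    push_cast at this
    nlinarith [H.hd]

theorem sumA_guard (z : K) (N : ℕ) :
    (∑ i ∈ Finset.range (N+1), cst (Acoef v cst π d z i) * π ^ i) = 0 ∨
      0 ≤ v (∑ i ∈ Finset.range (N+1), cst (Acoef v cst π d z i) * π ^ i) := by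
  refine H.guard_sum _ _ fun i _ => ?_
  by_cases hc : Acoef v cst π d z i = 0
  · left; rw [hc]; simp
  · right
    rw [(H.v_cpi hc i).2]
    have := H.hd
    positivity

theorem A_add {z z' : K} (hz : z = 0 ∨ 0 ≤ v z) (hz' : z' = 0 ∨ 0 ≤ v z') (j : ℕ) :
    Acoef v cst π d (z + z') j = Acoef v cst π d z j + Acoef v cst π d z' j := by
  refine H.Acoef_unique (H.guard_add hz hz')
    (fun i => Acoef v cst π d z i + Acoef v cst π d z' i) j ?_ j le_rfl
  have hsplit : ∑ i ∈ Finset.range (j+1), cst (Acoef v cst π d z i + Acoef v cst π d z' i) * π ^ i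
      = (∑ i ∈ Finset.range (j+1), cst (Acoef v cst π d z i) * π ^ i)
        + ∑ i ∈ Finset.range (j+1), cst (Acoef v cst π d z' i) * π ^ i := by
    rw [← Finset.sum_add_distrib]
    congr 1; ext i
    rw [map_add]; ring
  have hdiff : z + z' - ∑ i ∈ Finset.range (j+1),
        cst (Acoef v cst π d z i + Acoef v cst π d z' i) * π ^ i
      = remT v cst π d z (j+1) + remT v cst π d z' (j+1) := by
    rw [hsplit, remT, remT]; ring
  by_cases hd0 : remT v cst π d z (j+1) + remT v cst π d z' (j+1) = 0
  · left
    have := hdiff.trans hd0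
    linear_combination this
  · right
    rw [hdiff]
    refine ⟨hd0, ?_⟩
    refine lt_of_lt_of_le (lt_add_one _) (v_add_ge v H.hmin ?_ ?_ hd0)
    · rcases H.rem_high hz j with h | h
      · exact Or.inl h
      · exact Or.inr h.2
    · rcases H.rem_high hz' j with h | h
      · exact Or.inl h
      · exact Or.inr h.2

theorem A_cmul {z : K} (hz : z = 0 ∨ 0 ≤ v z) (c : k) (j : ℕ) :
    Acoef v cst π d (cst c * z) j = c * Acoef v cst π d z j := by
  by_cases hc : c = 0
  · subst hc
    rw [map_zero, zero_mul, zero_mul, (H.remT_of_zero j).2]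
  by_cases hz0 : z = 0
  · subst hz0
    simp [(H.remT_of_zero j).2]
  refine H.Acoef_unique ?_ (fun i => c * Acoef v cst π d z i) j ?_ j le_rfl
  · right
    rw [H.hmul _ _ (H.cstinj hc) hz0, H.hcst c hc]
    rcases hz with h | h
    · exact absurd h hz0
    · omega
  · have hsplit : ∑ i ∈ Finset.range (j+1), cst (c * Acoef v cst π d z i) * π ^ i
        = cst c * ∑ i ∈ Finset.range (j+1), cst (Acoef v cst π d z i) * π ^ i := by
      rw [Finset.mul_sum]
      congr 1; ext i
      rw [map_mul]; ring
    have hdiff : cst c * z - ∑ i ∈ Finset.range (j+1), cst (c * Acoef v cst π d z i) * π ^ i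
        = cst c * remT v cst π d z (j+1) := by
      rw [hsplit, remT]; ring
    by_cases hr : remT v cst π d z (j+1) = 0
    · left
      have : cst c * z - ∑ i ∈ Finset.range (j+1), cst (c * Acoef v cst π d z i) * π ^ i = 0 := by
        rw [hdiff, hr, mul_zero]
      linear_combination this
    · right
      rw [hdiff]
      have hne : cst c * remT v cst π d z (j+1) ≠ 0 := mul_ne_zero (H.cstinj hc) hr
      refine ⟨hne, ?_⟩
      rw [H.hmul _ _ (H.cstinj hc) hr, H.hcst c hc]
      have h2 := (H.rem_high hz j).resolve_left hr
      omega

theorem A_zero (j : ℕ) : Acoef v cst π d (0 : K) j = 0 := (H.remT_of_zero j).2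

theorem A_sum {ι : Type w} (s : Finset ι) (f : ι → K)
    (h : ∀ i ∈ s, f i = 0 ∨ 0 ≤ v (f i)) (j : ℕ) :
    Acoef v cst π d (∑ i ∈ s, f i) j = ∑ i ∈ s, Acoef v cst π d (f i) j := by
  classical
  induction s using Finset.induction_on with
  | empty => simp [H.A_zero]
  | @insert a s hnot ih =>
    rw [Finset.sum_insert hnot, Finset.sum_insert hnot,
      H.A_add (h a (Finset.mem_insert_self a s))
        (H.guard_sum s f fun i hi => h i (Finset.mem_insert_of_mem hi)),
      ih (fun i hi => h i (Finset.mem_insert_of_mem hi))]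

theorem A_mul {z z' : K} (hz : z = 0 ∨ 0 ≤ v z) (hz' : z' = 0 ∨ 0 ≤ v z') (j : ℕ) :
    Acoef v cst π d (z * z') j
      = ∑ p ∈ Finset.HasAntidiagonal.antidiagonal j, Acoef v cst π d z p.1 * Acoef v cst π d z' p.2 := by
  classical
  by_cases hz0 : z = 0
  · subst hz0
    rw [zero_mul, H.A_zero]
    refine (Finset.sum_eq_zero fun p _ => ?_).symm
    rw [H.A_zero, zero_mul]
  by_cases hz0' : z' = 0
  · subst hz0'
    rw [mul_zero, H.A_zero]
    refine (Finset.sum_eq_zero fun p _ => ?_).symm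
    rw [H.A_zero, mul_zero]
  have hvz : 0 ≤ v z := hz.resolve_left hz0
  have hvz' : 0 ≤ v z' := hz'.resolve_left hz0'
  set N := j with hN
  set Sz := ∑ i ∈ Finset.range (N+1), cst (Acoef v cst π d z i) * π ^ i with hSz
  set Sz' := ∑ i ∈ Finset.range (N+1), cst (Acoef v cst π d z' i) * π ^ i with hSz'
  set r := remT v cst π d z (N+1) with hr
  set r' := remT v cst π d z' (N+1) with hr'
  have key : ∀ i ≤ N, Acoef v cst π d (z * z') i
      = ∑ p ∈ Finset.HasAntidiagonal.antidiagonal i, Acoef v cst π d z p.1 * Acoef v cst π d z' p.2 := by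
    refine H.Acoef_unique (H.guard_mul hz hz') _ N ?_
    set S := ∑ i ∈ Finset.range (N+1),
        cst (∑ p ∈ Finset.HasAntidiagonal.antidiagonal i, Acoef v cst π d z p.1 * Acoef v cst π d z' p.2) * π ^ i
      with hS
    have hzr : z = Sz + r := by rw [hSz, hr, remT]; ring
    have hzr' : z' = Sz' + r' := by rw [hSz', hr', remT]; ring
    have hSS : Sz * Sz' - S = ∑ p ∈ (Finset.range (N+1) ×ˢ Finset.range (N+1)).filter
          (fun p => ¬ p.1 + p.2 ≤ N),
        cst (Acoef v cst π d z p.1 * Acoef v cst π d z' p.2) * π ^ (p.1 + p.2) := by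
      have h1 : Sz * Sz' = ∑ p ∈ Finset.range (N+1) ×ˢ Finset.range (N+1),
          cst (Acoef v cst π d z p.1 * Acoef v cst π d z' p.2) * π ^ (p.1 + p.2) := by
        rw [hSz, hSz', Finset.sum_mul_sum, Finset.sum_product]
        refine Finset.sum_congr rfl fun a _ => Finset.sum_congr rfl fun b _ => ?_
        rw [map_mul, pow_add]; ring
      have h2 : S = ∑ p ∈ (Finset.range (N+1) ×ˢ Finset.range (N+1)).filter
            (fun p => p.1 + p.2 ≤ N),
          cst (Acoef v cst π d z p.1 * Acoef v cst π d z' p.2) * π ^ (p.1 + p.2) := by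
        rw [hS]
        rw [← sum_antidiag_filter (fun a b =>
          cst (Acoef v cst π d z a * Acoef v cst π d z' b) * π ^ (a + b)) N]
        refine Finset.sum_congr rfl fun i _ => ?_
        rw [map_sum, Finset.sum_mul]
        refine Finset.sum_congr rfl fun p hp => ?_
        rw [Finset.HasAntidiagonal.mem_antidiagonal] at hp
        rw [hp]
      rw [h1, h2, ← Finset.sum_filter_add_sum_filter_not
        (Finset.range (N+1) ×ˢ Finset.range (N+1)) (fun p => p.1 + p.2 ≤ N)
        (fun p => cst (Acoef v cst π d z p.1 * Acoef v cst π d z' p.2) * π ^ (p.1 + p.2))]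
      ring
    have hT1 : Sz * Sz' - S = 0 ∨ (N:ℤ)*d + 1 ≤ v (Sz * Sz' - S) := by
      rw [hSS]
      refine v_sum_ge v H.hmin _ _ fun p hp => ?_
      by_cases hca : Acoef v cst π d z p.1 * Acoef v cst π d z' p.2 = 0
      · left; rw [hca, map_zero, zero_mul]
      · right
        rw [(H.v_cpi hca (p.1 + p.2)).2]
        simp only [Finset.mem_filter, Finset.mem_product, Finset.mem_range] at hp
        have hge : (N:ℤ) + 1 ≤ ((p.1 + p.2 : ℕ) : ℤ) := by
          have : N + 1 ≤ p.1 + p.2 := by omega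
          exact_mod_cast this
        nlinarith [H.hd]
    have hT2 : Sz * r' = 0 ∨ (N:ℤ)*d + 1 ≤ v (Sz * r') := by
      by_cases hS0 : Sz = 0
      · left; rw [hS0, zero_mul]
      by_cases hr0 : r' = 0
      · left; rw [hr0, mul_zero]
      right
      rw [H.hmul _ _ hS0 hr0]
      have h1 := (H.sumA_guard z N).resolve_left hS0
      have h2 := ((H.rem_high hz' N).resolve_left hr0).2
      rw [← hSz] at h1
      rw [← hr'] at h2
      omega
    have hT3 : r * z' = 0 ∨ (N:ℤ)*d + 1 ≤ v (r * z') := by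
      by_cases hr0 : r = 0
      · left; rw [hr0, zero_mul]
      right
      rw [H.hmul _ _ hr0 hz0']
      have h2 := ((H.rem_high hz N).resolve_left hr0).2
      rw [← hr] at h2
      omega
    have hkey : z * z' - S = (Sz * Sz' - S) + Sz * r' + r * z' := by
      rw [hzr, hzr']; ring
    by_cases hzero : z * z' - S = 0
    · left
      linear_combination hzero
    · right
      refine ⟨hzero, ?_⟩
      rw [hkey] at hzero ⊢
      have h12 : (Sz * Sz' - S) + Sz * r' = 0 ∨ (N:ℤ)*d + 1 ≤ v ((Sz * Sz' - S) + Sz * r') := by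
        by_cases h0 : (Sz * Sz' - S) + Sz * r' = 0
        · exact Or.inl h0
        · exact Or.inr (v_add_ge v H.hmin hT1 hT2 h0)
      have := v_add_ge v H.hmin h12 hT3 hzero
      omega
  exact key j le_rfl

end VS
end Core2

section PS
variable {k : Type u} [Field k]

open PowerSeries

/-- reindexing double antidiagonal sums (copy) -/
theorem sum_antidiag_filter' {M : Type w} [AddCommMonoid M] (g : ℕ → ℕ → M) (N : ℕ) :
    ∑ i ∈ Finset.range (N+1), ∑ p ∈ Finset.HasAntidiagonal.antidiagonal i, g p.1 p.2
      = ∑ p ∈ (Finset.range (N+1) ×ˢ Finset.range (N+1)).filter (fun p => p.1 + p.2 ≤ N),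
          g p.1 p.2 := by
  classical
  have hset : ((Finset.range (N+1)).biUnion Finset.HasAntidiagonal.antidiagonal)
      = (Finset.range (N+1) ×ˢ Finset.range (N+1)).filter (fun p => p.1 + p.2 ≤ N) := by
    ext ⟨a, b⟩
    simp only [Finset.mem_biUnion, Finset.mem_range, Finset.HasAntidiagonal.mem_antidiagonal, Finset.mem_filter,
      Finset.mem_product]
    constructor
    · rintro ⟨i, hi, hab⟩; omega
    · rintro ⟨⟨ha, hb⟩, hab⟩; exact ⟨a + b, by omega, rfl⟩
  have hdisj : Set.PairwiseDisjoint ↑(Finset.range (N+1))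
      (Finset.HasAntidiagonal.antidiagonal : ℕ → Finset (ℕ × ℕ)) := by
    intro i _ j _ hij
    simp only [Function.onFun]
    rw [Finset.disjoint_left]
    intro p hp hq
    rw [Finset.HasAntidiagonal.mem_antidiagonal] at hp hq
    exact hij (hp ▸ hq)
  rw [← hset, Finset.sum_biUnion hdisj]

theorem coeff_mul_low (f g : PowerSeries k) (α β : ℕ)
    (hf : ∀ i < α, coeff (R := k) i f = 0) (hg : ∀ i < β, coeff (R := k) i g = 0) :
    (∀ N < α + β, coeff (R := k) N (f * g) = 0) ∧
      coeff (R := k) (α + β) (f * g) = coeff (R := k) α f * coeff (R := k) β g := by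
  constructor
  · intro N hN
    rw [coeff_mul]
    refine Finset.sum_eq_zero fun p hp => ?_
    rw [Finset.HasAntidiagonal.mem_antidiagonal] at hp
    rcases Nat.lt_or_ge p.1 α with h | h
    · rw [hf p.1 h, zero_mul]
    · rw [hg p.2 (by omega), mul_zero]
  · rw [coeff_mul]
    rw [Finset.sum_eq_single (α, β)]
    · intro p hp hne
      rw [Finset.HasAntidiagonal.mem_antidiagonal] at hp
      rcases Nat.lt_or_ge p.1 α with h | h
      · rw [hf p.1 h, zero_mul]
      · have : p.2 < β ∨ p = (α, β) := by
          rcases Nat.lt_or_ge p.2 β with h2 | h2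
          · exact Or.inl h2
          · right
            have h1 : p.1 = α := by omega
            have h2' : p.2 = β := by omega
            exact Prod.ext h1 h2'
        rcases this with h2 | h2
        · rw [hg p.2 h2, mul_zero]
        · exact absurd h2 hne
    · intro hmem
      exact absurd (by rw [Finset.HasAntidiagonal.mem_antidiagonal]) hmem

theorem coeff_pow_low (F : PowerSeries k) (p : ℕ) (hF : ∀ i < p, coeff (R := k) i F = 0) (m : ℕ) :
    (∀ N < p * m, coeff (R := k) N (F ^ m) = 0) ∧
      coeff (R := k) (p * m) (F ^ m) = (coeff (R := k) p F) ^ m := by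
  induction m with
  | zero => simp
  | succ m ih =>
    have h := coeff_mul_low (F ^ m) F (p * m) p ih.1 hF
    have harith : p * m + p = p * (m + 1) := by ring
    constructor
    · intro N hN
      rw [pow_succ]
      exact h.1 N (by omega)
    · rw [pow_succ, ← harith, h.2, ih.2, pow_succ]

/-- coefficients of `F^m` below `m` vanish when `F` has positive order -/
theorem coeff_pow_low1 (F : PowerSeries k) (hF : constantCoeff (R := k) F = 0) {N m : ℕ} (h : N < m) :
    coeff (R := k) N (F ^ m) = 0 := by
  refine (coeff_pow_low F 1 ?_ m).1 N (by omega)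
  intro i hi
  interval_cases i
  rw [coeff_zero_eq_constantCoeff]
  exact hF

/-- substitution of `F` into a power series, coefficientwise -/
noncomputable def epsF (F : PowerSeries k) (u : PowerSeries k) : PowerSeries k :=
  PowerSeries.mk fun N => ∑ m ∈ Finset.range (N+1), coeff (R := k) m u * coeff (R := k) N (F ^ m)

theorem epsF_coeff (F u : PowerSeries k) (N : ℕ) :
    coeff (R := k) N (epsF F u) = ∑ m ∈ Finset.range (N+1), coeff (R := k) m u * coeff (R := k) N (F ^ m) := by
  rw [epsF, coeff_mk]

theorem epsF_stable (F : PowerSeries k) (hF : constantCoeff (R := k) F = 0) (u : PowerSeries k)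
    {N M : ℕ} (hNM : N ≤ M) :
    coeff (R := k) N (epsF F u) = coeff (R := k) N (∑ m ∈ Finset.range (M+1), C (R := k) (coeff (R := k) m u) * F ^ m) := by
  rw [epsF_coeff, map_sum]
  have : ∀ m : ℕ, coeff (R := k) N (C (R := k) (coeff (R := k) m u) * F ^ m) = coeff (R := k) m u * coeff (R := k) N (F ^ m) := by
    intro m
    rw [coeff_C_mul]
  simp_rw [this]
  refine Finset.sum_subset (by intro m hm; simp only [Finset.mem_range] at *; omega) ?_
  intro m hm hnm
  simp only [Finset.mem_range] at hm hnm
  rw [coeff_pow_low1 F hF (by omega), mul_zero]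

theorem epsF_add (F u u' : PowerSeries k) : epsF F (u + u') = epsF F u + epsF F u' := by
  ext N
  rw [map_add, epsF_coeff, epsF_coeff, epsF_coeff, ← Finset.sum_add_distrib]
  refine Finset.sum_congr rfl fun m _ => ?_
  rw [map_add]; ring

theorem epsF_zero (F : PowerSeries k) : epsF F 0 = 0 := by
  ext N
  rw [epsF_coeff]
  simp

theorem epsF_sum {ι : Type w} (F : PowerSeries k) (s : Finset ι) (f : ι → PowerSeries k) :
    epsF F (∑ i ∈ s, f i) = ∑ i ∈ s, epsF F (f i) := by
  classical
  induction s using Finset.induction_on with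
  | empty => simp [epsF_zero]
  | @insert a s hnot ih =>
    rw [Finset.sum_insert hnot, Finset.sum_insert hnot, epsF_add, ih]

theorem epsF_mul (F : PowerSeries k) (hF : constantCoeff (R := k) F = 0) (u u' : PowerSeries k) :
    epsF F (u * u') = epsF F u * epsF F u' := by
  classical
  ext N
  rw [coeff_mul, epsF_coeff]
  -- RHS: extend inner sums to range (N+1)
  have hrhs : ∑ p ∈ Finset.HasAntidiagonal.antidiagonal N, coeff (R := k) p.1 (epsF F u) * coeff (R := k) p.2 (epsF F u')
      = ∑ p ∈ Finset.HasAntidiagonal.antidiagonal N,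
          (∑ m ∈ Finset.range (N+1), coeff (R := k) m u * coeff (R := k) p.1 (F ^ m)) *
          (∑ m ∈ Finset.range (N+1), coeff (R := k) m u' * coeff (R := k) p.2 (F ^ m)) := by
    refine Finset.sum_congr rfl fun p hp => ?_
    rw [Finset.HasAntidiagonal.mem_antidiagonal] at hp
    rw [epsF_coeff, epsF_coeff]
    congr 1
    · refine Finset.sum_subset (by intro m hm; simp only [Finset.mem_range] at *; omega) ?_
      intro m hm hnm
      simp only [Finset.mem_range] at hm hnm
      rw [coeff_pow_low1 F hF (by omega), mul_zero]
    · refine Finset.sum_subset (by intro m hm; simp only [Finset.mem_range] at *; omega) ?_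
      intro m hm hnm
      simp only [Finset.mem_range] at hm hnm
      rw [coeff_pow_low1 F hF (by omega), mul_zero]
  rw [hrhs]
  have hswap : ∑ p ∈ Finset.HasAntidiagonal.antidiagonal N,
      (∑ m ∈ Finset.range (N+1), coeff (R := k) m u * coeff (R := k) p.1 (F ^ m)) *
      (∑ m ∈ Finset.range (N+1), coeff (R := k) m u' * coeff (R := k) p.2 (F ^ m))
    = ∑ m ∈ Finset.range (N+1), ∑ m' ∈ Finset.range (N+1),
        coeff (R := k) m u * coeff (R := k) m' u' * coeff (R := k) N (F ^ (m + m')) := by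
    have h1 : ∀ p : ℕ × ℕ, p ∈ Finset.HasAntidiagonal.antidiagonal N →
        (∑ m ∈ Finset.range (N+1), coeff (R := k) m u * coeff (R := k) p.1 (F ^ m)) *
        (∑ m ∈ Finset.range (N+1), coeff (R := k) m u' * coeff (R := k) p.2 (F ^ m))
        = ∑ m ∈ Finset.range (N+1), ∑ m' ∈ Finset.range (N+1),
            coeff (R := k) m u * coeff (R := k) m' u' * (coeff (R := k) p.1 (F ^ m) * coeff (R := k) p.2 (F ^ m')) := by
      intro p _
      rw [Finset.sum_mul_sum]
      refine Finset.sum_congr rfl fun m _ => Finset.sum_congr rfl fun m' _ => by ring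
    rw [Finset.sum_congr rfl h1, Finset.sum_comm]
    refine Finset.sum_congr rfl fun m _ => ?_
    rw [Finset.sum_comm]
    refine Finset.sum_congr rfl fun m' _ => ?_
    rw [← Finset.mul_sum, ← coeff_mul, ← pow_add]
  rw [hswap]
  -- LHS: coeff of u*u' expansion
  have hlhs : ∑ s ∈ Finset.range (N+1), coeff (R := k) s (u * u') * coeff (R := k) N (F ^ s)
      = ∑ s ∈ Finset.range (N+1), ∑ p ∈ Finset.HasAntidiagonal.antidiagonal s,
          coeff (R := k) p.1 u * coeff (R := k) p.2 u' * coeff (R := k) N (F ^ (p.1 + p.2)) := by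
    refine Finset.sum_congr rfl fun s _ => ?_
    rw [coeff_mul, Finset.sum_mul]
    refine Finset.sum_congr rfl fun p hp => ?_
    rw [Finset.HasAntidiagonal.mem_antidiagonal] at hp
    rw [hp]
  rw [hlhs, sum_antidiag_filter' (fun a b => coeff (R := k) a u * coeff (R := k) b u' * coeff (R := k) N (F ^ (a+b))) N]
  rw [← Finset.sum_product']
  symm
  refine (Finset.sum_subset (Finset.filter_subset _ _) ?_).symm
  intro p hp hnp
  simp only [Finset.mem_filter, Finset.mem_product, Finset.mem_range] at hp hnp
  rw [coeff_pow_low1 F hF (by omega), mul_zero]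

end PS

section Divi
variable {k : Type u} [Field k]
open PowerSeries

theorem coeff_B (F : PowerSeries k) (p : ℕ) (hp : 1 ≤ p) (hlow : ∀ i < p, coeff (R := k) i F = 0)
    (N N' : ℕ) :
    (N < N' → coeff (R := k) N (F ^ (N'/p) * X ^ (N' % p)) = 0) ∧
      coeff (R := k) N' (F ^ (N'/p) * X ^ (N' % p)) = (coeff (R := k) p F) ^ (N'/p) := by
  have hX : ∀ i < N' % p, coeff (R := k) i ((X : PowerSeries k) ^ (N' % p)) = 0 := by
    intro i hi
    rw [coeff_X_pow, if_neg (by omega)]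
  have h := coeff_mul_low (F ^ (N'/p)) (X ^ (N' % p)) (p * (N'/p)) (N' % p)
    ((coeff_pow_low F p hlow (N'/p)).1) hX
  have harith : p * (N'/p) + N' % p = N' := Nat.div_add_mod N' p
  constructor
  · intro hN
    exact (harith ▸ h.1) N (by omega)
  · have h2 := h.2
    rw [harith] at h2
    rw [h2, (coeff_pow_low F p hlow (N'/p)).2, coeff_X_pow, if_pos rfl, mul_one]

noncomputable def divC (F : PowerSeries k) (p : ℕ) (h : PowerSeries k) : ℕ → k
  | N => (PowerSeries.coeff (R := k) N h - ∑ i ∈ (Finset.range N).attach,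
        divC F p h i.1 * PowerSeries.coeff (R := k) N (F ^ (i.1/p) * X ^ (i.1 % p))) *
      ((PowerSeries.coeff (R := k) p F) ^ (N/p))⁻¹
  decreasing_by exact Finset.mem_range.mp i.2

theorem divC_spec (F : PowerSeries k) (p : ℕ) (hp : 1 ≤ p) (hlow : ∀ i < p, coeff (R := k) i F = 0)
    (hne : coeff (R := k) p F ≠ 0) (h : PowerSeries k) (N : ℕ) :
    coeff (R := k) N h = ∑ N' ∈ Finset.range (N+1),
      divC F p h N' * coeff (R := k) N (F ^ (N'/p) * X ^ (N' % p)) := by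
  have hBN := (coeff_B F p hp hlow N N).2
  have hc : (coeff (R := k) p F) ^ (N/p) ≠ 0 := pow_ne_zero _ hne
  rw [Finset.sum_range_succ, hBN]
  have hdef : divC F p h N = (coeff (R := k) N h - ∑ i ∈ Finset.range N,
      divC F p h i * coeff (R := k) N (F ^ (i/p) * X ^ (i % p))) * ((coeff (R := k) p F) ^ (N/p))⁻¹ := by
    rw [divC]
    congr 2
    exact Finset.sum_attach (Finset.range N)
      (fun i => divC F p h i * coeff (R := k) N (F ^ (i/p) * X ^ (i % p)))
  rw [hdef]
  field_simp
  ring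

theorem div_repr (F : PowerSeries k) (p : ℕ) (hp : 1 ≤ p) (hlow : ∀ i < p, coeff (R := k) i F = 0)
    (hne : coeff (R := k) p F ≠ 0) (h : PowerSeries k) :
    h = ∑ i ∈ Finset.range p,
      epsF F (PowerSeries.mk fun m => divC F p h (p * m + i)) * X ^ i := by
  have hF0 : constantCoeff (R := k) F = 0 := by
    rw [← coeff_zero_eq_constantCoeff]
    exact hlow 0 (by omega)
  ext N
  rw [map_sum]
  have step1 : ∀ i, i < p →
      coeff (R := k) N (epsF F (PowerSeries.mk fun m => divC F p h (p * m + i)) * X ^ i)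
        = ∑ m ∈ Finset.range (N+1),
            divC F p h (p*m+i) * coeff (R := k) N (F ^ ((p*m+i)/p) * X ^ ((p*m+i) % p)) := by
    intro i hi
    have hdm : ∀ m : ℕ, (p*m+i)/p = m ∧ (p*m+i) % p = i := by
      intro m
      constructor
      · rw [Nat.mul_add_div (by omega)]
        simp [Nat.div_eq_of_lt hi]
      · rw [Nat.mul_add_mod]
        exact Nat.mod_eq_of_lt hi
    by_cases hiN : i ≤ N
    · rw [PowerSeries.coeff_mul_X_pow', if_pos hiN, epsF_coeff]
      simp only [coeff_mk]
      have hterm : ∀ m : ℕ,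
          divC F p h (p*m+i) * coeff (R := k) N (F ^ ((p*m+i)/p) * X ^ ((p*m+i) % p))
            = divC F p h (p*m+i) * coeff (R := k) (N - i) (F ^ m) := by
        intro m
        rw [(hdm m).1, (hdm m).2, PowerSeries.coeff_mul_X_pow', if_pos hiN]
      simp_rw [hterm]
      refine Finset.sum_subset (by intro m hm; simp only [Finset.mem_range] at *; omega) ?_
      intro m hm hnm
      simp only [Finset.mem_range] at hm hnm
      rw [coeff_pow_low1 F hF0 (by omega), mul_zero]
    · rw [PowerSeries.coeff_mul_X_pow', if_neg hiN]
      symm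
      refine Finset.sum_eq_zero fun m _ => ?_
      rw [(hdm m).1, (hdm m).2, PowerSeries.coeff_mul_X_pow', if_neg hiN, mul_zero]
  rw [Finset.sum_congr rfl (fun i hi => step1 i (Finset.mem_range.mp hi))]
  -- reindex
  set g : ℕ → k := fun N' => divC F p h N' * coeff (R := k) N (F ^ (N'/p) * X ^ (N' % p)) with hg
  have hsum : ∑ i ∈ Finset.range p, ∑ m ∈ Finset.range (N+1), g (p*m+i)
      = ∑ N' ∈ (Finset.range p ×ˢ Finset.range (N+1)).image (fun q => p * q.2 + q.1), g N' := by
    rw [Finset.sum_image]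
    · rw [Finset.sum_product]
    · intro q1 h1 q2 h2 heq
      simp only [Finset.coe_product, Set.mem_prod, Finset.mem_coe, Finset.mem_range] at h1 h2
      have e1 : q1.1 = (p * q1.2 + q1.1) % p := by
        rw [Nat.mul_add_mod, Nat.mod_eq_of_lt h1.1]
      have e2 : q2.1 = (p * q2.2 + q2.1) % p := by
        rw [Nat.mul_add_mod, Nat.mod_eq_of_lt h2.1]
      have e3 : q1.2 = (p * q1.2 + q1.1) / p := by
        rw [Nat.mul_add_div (by omega), Nat.div_eq_of_lt h1.1, add_zero]
      have e4 : q2.2 = (p * q2.2 + q2.1) / p := by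
        rw [Nat.mul_add_div (by omega), Nat.div_eq_of_lt h2.1, add_zero]
      have : q1.1 = q2.1 := by rw [e1, e2]; exact congrArg (· % p) heq
      have : q1.2 = q2.2 := by rw [e3, e4]; exact congrArg (· / p) heq
      exact Prod.ext ‹q1.1 = q2.1› this
  rw [hsum, divC_spec F p hp hlow hne h N]
  have hsub : Finset.range (N+1) ⊆ (Finset.range p ×ˢ Finset.range (N+1)).image
      (fun q => p * q.2 + q.1) := by
    intro N' hN'
    simp only [Finset.mem_range] at hN'
    simp only [Finset.mem_image, Finset.mem_product, Finset.mem_range]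
    refine ⟨(N' % p, N' / p), ⟨Nat.mod_lt _ (by omega), by
      have := Nat.div_le_self N' p; omega⟩, Nat.div_add_mod N' p⟩
  have hzero : ∀ N' ∈ (Finset.range p ×ˢ Finset.range (N+1)).image (fun q => p * q.2 + q.1),
      N' ∉ Finset.range (N+1) → g N' = 0 := by
    intro N' _ hN'
    simp only [Finset.mem_range] at hN'
    have hz := (coeff_B F p hp hlow N N').1 (by omega)
    show divC F p h N' * coeff (R := k) N (F ^ (N'/p) * X ^ (N' % p)) = 0
    rw [hz, mul_zero]
  exact Finset.sum_subset hsub hzero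

theorem exists_dep (F : PowerSeries k) (p : ℕ) (hp : 1 ≤ p) (hlow : ∀ i < p, coeff (R := k) i F = 0)
    (hne : coeff (R := k) p F ≠ 0) (G : PowerSeries k) :
    ∃ q : ℕ → PowerSeries k, (∃ j, j ≤ p ∧ q j ≠ 0) ∧ (∀ j, p < j → q j = 0) ∧
      ∑ j ∈ Finset.range (p+1), epsF F (q j) * G ^ j = 0 := by
  classical
  have hF0 : constantCoeff (R := k) F = 0 := by
    rw [← coeff_zero_eq_constantCoeff]
    exact hlow 0 (by omega)
  set L := FractionRing (PowerSeries k)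
  set alg := algebraMap (PowerSeries k) L with halg
  set W : Fin (p+1) → ℕ → PowerSeries k :=
    fun j i => PowerSeries.mk fun m => divC F p (G ^ (j:ℕ)) (p * m + i) with hWdef
  have hWrepr : ∀ j : Fin (p+1), G ^ (j:ℕ) = ∑ i ∈ Finset.range p, epsF F (W j i) * X ^ i :=
    fun j => div_repr F p hp hlow hne (G ^ (j:ℕ))
  set a : Fin (p+1) → Fin p → L := fun j i => alg (W j i.1) with ha
  have hdep : ¬ LinearIndependent L a := by
    intro hli
    have hcard := hli.fintype_card_le_finrank
    rw [Module.finrank_fintype_fun_eq_card] at hcard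
    simp only [Fintype.card_fin] at hcard
    omega
  rw [Fintype.linearIndependent_iff] at hdep
  push_neg at hdep
  obtain ⟨g, hg, j0, hgj0⟩ := hdep
  obtain ⟨b, hb⟩ := IsLocalization.exist_integer_multiples
    (nonZeroDivisors (PowerSeries k)) Finset.univ g
  set Q : Fin (p+1) → PowerSeries k := fun j => (hb j (Finset.mem_univ j)).choose with hQ
  have hQspec : ∀ j : Fin (p+1), alg (Q j) = (b : PowerSeries k) • g j :=
    fun j => (hb j (Finset.mem_univ j)).choose_spec
  have halginj : Function.Injective alg := IsFractionRing.injective (PowerSeries k) L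
  have hkey : ∀ i : ℕ, i < p → ∑ j : Fin (p+1), Q j * W j i = 0 := by
    intro i hi
    apply halginj
    rw [map_sum, map_zero]
    have h1 : ∀ j : Fin (p+1), alg (Q j * W j i) = ((b : PowerSeries k) • g j) * a j ⟨i, hi⟩ := by
      intro j
      rw [map_mul, hQspec j, ha]
    rw [Finset.sum_congr rfl fun j _ => h1 j]
    have hzero : ∑ j : Fin (p+1), g j * a j ⟨i, hi⟩ = 0 := by
      have := congrFun hg ⟨i, hi⟩
      simpa [Finset.sum_apply, Pi.smul_apply, smul_eq_mul] using this
    calc ∑ j : Fin (p+1), ((b : PowerSeries k) • g j) * a j ⟨i, hi⟩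
        = (b : PowerSeries k) • ∑ j : Fin (p+1), g j * a j ⟨i, hi⟩ := by
          rw [Finset.smul_sum]
          refine Finset.sum_congr rfl fun j _ => ?_
          rw [smul_mul_assoc]
      _ = 0 := by rw [hzero, smul_zero]
  have hQj0 : Q j0 ≠ 0 := by
    intro h0
    have hsp := hQspec j0
    rw [h0, map_zero] at hsp
    have hb0 : (b : PowerSeries k) ≠ 0 := nonZeroDivisors.ne_zero b.2
    have halgb : alg (b : PowerSeries k) ≠ 0 := fun hh => hb0 (halginj (by rw [hh, map_zero]))
    rw [Algebra.smul_def] at hsp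
    exact hgj0 (by
      rcases mul_eq_zero.mp hsp.symm with h | h
      · exact absurd h halgb
      · exact h)
  set q : ℕ → PowerSeries k := fun j => if hj : j < p + 1 then Q ⟨j, hj⟩ else 0 with hq
  refine ⟨q, ⟨j0.1, by omega, by simp only [hq]; rw [dif_pos j0.2]; simpa using hQj0⟩,
    fun j hj => by simp only [hq]; rw [dif_neg (by omega)], ?_⟩
  have hconv : ∑ j ∈ Finset.range (p+1), epsF F (q j) * G ^ j
      = ∑ j : Fin (p+1), epsF F (Q j) * G ^ (j:ℕ) := by
    rw [← Fin.sum_univ_eq_sum_range (fun j => epsF F (q j) * G ^ j)]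
    refine Finset.sum_congr rfl fun j _ => ?_
    simp only [hq]
    rw [dif_pos j.2]
  rw [hconv]
  calc ∑ j : Fin (p+1), epsF F (Q j) * G ^ (j:ℕ)
      = ∑ j : Fin (p+1), ∑ i ∈ Finset.range p, epsF F (Q j * W j i) * X ^ i := by
        refine Finset.sum_congr rfl fun j _ => ?_
        rw [hWrepr j, Finset.mul_sum]
        refine Finset.sum_congr rfl fun i _ => ?_
        rw [epsF_mul F hF0 (Q j) (W j i)]
        ring
    _ = ∑ i ∈ Finset.range p, ∑ j : Fin (p+1), epsF F (Q j * W j i) * X ^ i :=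
        Finset.sum_comm
    _ = 0 := by
        refine Finset.sum_eq_zero fun i hi => ?_
        rw [← Finset.sum_mul, ← epsF_sum, hkey i (Finset.mem_range.mp hi), epsF_zero, zero_mul]
end Divi

section Assemble
variable {k : Type u} [Field k] {K : Type v} [Field K]
variable {v : K → ℤ} {cst : k →+* K} {π : K} {d : ℤ}

open PowerSeries

namespace VS
variable (H : VS v cst π d)
include H

theorem A_one (j : ℕ) : Acoef v cst π d (1 : K) j = if j = 0 then 1 else 0 := by
  refine H.Acoef_unique (Or.inr (by rw [v_one v H.hmul])) (fun i => if i = 0 then 1 else 0) j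
    ?_ j le_rfl
  left
  rw [Finset.sum_eq_single 0]
  · simp
  · intro i _ hi
    simp only [if_neg hi, map_zero, zero_mul]
  · intro h
    exact absurd (Finset.mem_range.mpr (by omega)) h

theorem mkA_mul {z z' : K} (hz : z = 0 ∨ 0 ≤ v z) (hz' : z' = 0 ∨ 0 ≤ v z') :
    PowerSeries.mk (Acoef v cst π d (z * z'))
      = PowerSeries.mk (Acoef v cst π d z) * PowerSeries.mk (Acoef v cst π d z') := by
  ext N
  rw [coeff_mk, PowerSeries.coeff_mul, H.A_mul hz hz' N]
  refine Finset.sum_congr rfl fun p _ => ?_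
  rw [coeff_mk, coeff_mk]

theorem guard_pow {z : K} (hz : z = 0 ∨ 0 ≤ v z) (m : ℕ) : z ^ m = 0 ∨ 0 ≤ v (z ^ m) := by
  induction m with
  | zero => right; rw [pow_zero, v_one v H.hmul]
  | succ m ih =>
    rw [pow_succ]
    exact H.guard_mul ih hz

theorem mkA_pow {z : K} (hz : z = 0 ∨ 0 ≤ v z) (m : ℕ) :
    PowerSeries.mk (Acoef v cst π d (z ^ m)) = (PowerSeries.mk (Acoef v cst π d z)) ^ m := by
  induction m with
  | zero =>
    rw [pow_zero, pow_zero]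
    ext N
    rw [coeff_mk, H.A_one N, PowerSeries.coeff_one]
  | succ m ih =>
    rw [pow_succ, pow_succ, H.mkA_mul (H.guard_pow hz m) hz, ih]

theorem main_relation (x y : K) (hx0 : x ≠ 0) (hy0 : y ≠ 0) (hvx : 0 < v x) (hvy : 0 < v y) :
    ∃ (P : ℕ) (q : ℕ → PowerSeries k), (∃ j, j ≤ P ∧ q j ≠ 0) ∧ (∀ j, P < j → q j = 0) ∧
      ∀ M : ℕ, (∑ j ∈ Finset.range (P+1), ∑ m ∈ Finset.range (M+1),
          cst (PowerSeries.coeff (R := k) m (q j)) * (x ^ m * y ^ j)) = 0 ∨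
        (M:ℤ) < v (∑ j ∈ Finset.range (P+1), ∑ m ∈ Finset.range (M+1),
          cst (PowerSeries.coeff (R := k) m (q j)) * (x ^ m * y ^ j)) := by
  classical
  have hgx : x = 0 ∨ 0 ≤ v x := Or.inr hvx.le
  have hgy : y = 0 ∨ 0 ≤ v y := Or.inr hvy.le
  set F := PowerSeries.mk (Acoef v cst π d x) with hF
  set G := PowerSeries.mk (Acoef v cst π d y) with hG
  -- the order of F
  obtain ⟨e, he⟩ := H.hdvd x hx0
  have he0 : 0 < e := by nlinarith [H.hd]
  set p₀ := e.toNat with hp₀def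
  have hp₀ : v x = (p₀ : ℤ) * d := by rw [he, hp₀def]; rw [Int.toNat_of_nonneg he0.le]; ring
  have hp₀1 : 1 ≤ p₀ := by
    by_contra hcon
    have : p₀ = 0 := by omega
    rw [this] at hp₀
    simp at hp₀
    omega
  have hxlow : ∀ j : ℕ, j ≤ p₀ → remT v cst π d x j = x := by
    intro j hj
    induction j with
    | zero => exact remT_zero x
    | succ j ih =>
      have hj' : j ≤ p₀ := by omega
      have hrj := ih hj'
      have hA : Acoef v cst π d x j = 0 := by
        rw [Acoef_eq, hrj, H.nextC_eq_zero (Or.inr ⟨hx0, by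
          rw [hp₀]
          have : (j:ℤ) < (p₀:ℤ) := by exact_mod_cast (by omega : j < p₀)
          nlinarith [H.hd]⟩)]
      rw [remT_succ, hrj, hA, map_zero, zero_mul, sub_zero]
  have hlowF : ∀ i < p₀, coeff (R := k) i F = 0 := by
    intro i hi
    rw [hF, coeff_mk]
    rw [Acoef_eq, hxlow i (by omega), H.nextC_eq_zero (Or.inr ⟨hx0, by
      rw [hp₀]
      have : (i:ℤ) < (p₀:ℤ) := by exact_mod_cast hi
      nlinarith [H.hd]⟩)]
  have hneF : coeff (R := k) p₀ F ≠ 0 := by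
    rw [hF, coeff_mk]
    rw [Acoef_eq, hxlow p₀ le_rfl]
    exact (nextC_spec (H.nextC_exists hx0 (by rw [hp₀]))).1
  obtain ⟨q, hq1, hq2, hq3⟩ := exists_dep F p₀ hp₀1 hlowF hneF G
  refine ⟨p₀, q, hq1, hq2, ?_⟩
  intro M
  set S := ∑ j ∈ Finset.range (p₀+1), ∑ m ∈ Finset.range (M+1),
      cst (PowerSeries.coeff (R := k) m (q j)) * (x ^ m * y ^ j) with hS
  have hmong : ∀ m j : ℕ, x ^ m * y ^ j = 0 ∨ 0 ≤ v (x ^ m * y ^ j) :=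
    fun m j => H.guard_mul (H.guard_pow hgx m) (H.guard_pow hgy j)
  have htermg : ∀ (c : k) (m j : ℕ), cst c * (x ^ m * y ^ j) = 0 ∨
      0 ≤ v (cst c * (x ^ m * y ^ j)) := by
    intro c m j
    by_cases hc : c = 0
    · left; rw [hc, map_zero, zero_mul]
    · exact H.guard_mul (Or.inr (le_of_eq (H.hcst c hc).symm)) (hmong m j)
  have hinnerg : ∀ j : ℕ, (∑ m ∈ Finset.range (M+1),
      cst (PowerSeries.coeff (R := k) m (q j)) * (x ^ m * y ^ j)) = 0 ∨
      0 ≤ v (∑ m ∈ Finset.range (M+1), cst (PowerSeries.coeff (R := k) m (q j)) * (x ^ m * y ^ j)) :=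
    fun j => H.guard_sum _ _ fun m _ => htermg _ m j
  have hSg : S = 0 ∨ 0 ≤ v S := H.guard_sum _ _ fun j _ => hinnerg j
  -- coefficients of S vanish up to M
  have hAS : ∀ N : ℕ, N ≤ M → Acoef v cst π d S N = 0 := by
    intro N hNM
    have h1 : Acoef v cst π d S N = ∑ j ∈ Finset.range (p₀+1), ∑ m ∈ Finset.range (M+1),
        PowerSeries.coeff (R := k) m (q j) * PowerSeries.coeff (R := k) N (F ^ m * G ^ j) := by
      rw [hS, H.A_sum _ _ (fun j _ => hinnerg j) N]
      refine Finset.sum_congr rfl fun j _ => ?_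
      rw [H.A_sum _ _ (fun m _ => htermg _ m j) N]
      refine Finset.sum_congr rfl fun m _ => ?_
      rw [H.A_cmul (hmong m j) _ N]
      congr 1
      have : PowerSeries.mk (Acoef v cst π d (x ^ m * y ^ j)) = F ^ m * G ^ j := by
        rw [H.mkA_mul (H.guard_pow hgx m) (H.guard_pow hgy j), H.mkA_pow hgx m,
          H.mkA_pow hgy j]
      calc Acoef v cst π d (x ^ m * y ^ j) N
          = coeff (R := k) N (PowerSeries.mk (Acoef v cst π d (x ^ m * y ^ j))) := (coeff_mk N _).symm
        _ = coeff (R := k) N (F ^ m * G ^ j) := by rw [this]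
    have hF0 : constantCoeff (R := k) F = 0 := by
      rw [← coeff_zero_eq_constantCoeff]
      exact hlowF 0 (by omega)
    -- rewrite as a coefficient of a power series identity
    have h2 : ∀ j : ℕ, ∑ m ∈ Finset.range (M+1),
        PowerSeries.coeff (R := k) m (q j) * PowerSeries.coeff (R := k) N (F ^ m * G ^ j)
          = coeff (R := k) N ((∑ m ∈ Finset.range (M+1), C (R := k) (PowerSeries.coeff (R := k) m (q j)) * F ^ m)
              * G ^ j) := by
      intro j
      rw [Finset.sum_mul, map_sum]
      refine Finset.sum_congr rfl fun m _ => ?_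
      rw [mul_assoc, coeff_C_mul]
    have h3 : ∀ j : ℕ, (∑ m ∈ Finset.range (M+1), C (R := k) (PowerSeries.coeff (R := k) m (q j)) * F ^ m)
        = epsF F (q j) - (epsF F (q j) - ∑ m ∈ Finset.range (M+1),
            C (R := k) (PowerSeries.coeff (R := k) m (q j)) * F ^ m) := by
      intro j; ring
    have h4 : ∀ j : ℕ, coeff (R := k) N ((epsF F (q j) - ∑ m ∈ Finset.range (M+1),
        C (R := k) (PowerSeries.coeff (R := k) m (q j)) * F ^ m) * G ^ j) = 0 := by
      intro j
      rw [PowerSeries.coeff_mul]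
      refine Finset.sum_eq_zero fun pr hpr => ?_
      rw [Finset.HasAntidiagonal.mem_antidiagonal] at hpr
      have hc : coeff (R := k) pr.1 (epsF F (q j) - ∑ m ∈ Finset.range (M+1),
          C (R := k) (PowerSeries.coeff (R := k) m (q j)) * F ^ m) = 0 := by
        rw [map_sub, epsF_stable F hF0 (q j) (by omega : pr.1 ≤ M), sub_self]
      rw [hc, zero_mul]
    rw [h1, Finset.sum_congr rfl fun j _ => h2 j]
    have h5 : ∑ j ∈ Finset.range (p₀+1),
        coeff (R := k) N ((∑ m ∈ Finset.range (M+1), C (R := k) (PowerSeries.coeff (R := k) m (q j)) * F ^ m) * G ^ j)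
          = ∑ j ∈ Finset.range (p₀+1), (coeff (R := k) N (epsF F (q j) * G ^ j)
            - coeff (R := k) N ((epsF F (q j) - ∑ m ∈ Finset.range (M+1),
                C (R := k) (PowerSeries.coeff (R := k) m (q j)) * F ^ m) * G ^ j)) := by
      refine Finset.sum_congr rfl fun j _ => ?_
      rw [h3 j]
      rw [sub_mul, map_sub]
      congr 1
      rw [← h3 j]
    rw [h5]
    rw [Finset.sum_sub_distrib]
    rw [Finset.sum_congr rfl fun j _ => h4 j]
    rw [← map_sum, hq3]
    simp
  -- conclude
  have hrem : remT v cst π d S (M+1) = S := by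
    rw [remT]
    rw [Finset.sum_eq_zero fun i hi => by
      rw [hAS i (by simp only [Finset.mem_range] at hi; omega), map_zero, zero_mul]]
    ring
  by_cases hS0 : S = 0
  · exact Or.inl hS0
  · right
    have := H.remT_inv hSg (M+1) (by rw [hrem]; exact hS0)
    rw [hrem] at this
    push_cast at this
    nlinarith [H.hd]

end VS
end Assemble

section ProdLemma
variable {K : Type v} [Field K]

theorem v_prod (v : K → ℤ)
    (hmul : ∀ x y : K, x ≠ 0 → y ≠ 0 → v (x * y) = v x + v y)
    (s : Multiset K) : (∀ w ∈ s, w ≠ 0 ∧ 0 ≤ v w) →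
    s.prod ≠ 0 ∧ 0 ≤ v s.prod ∧ (v s.prod ≠ 0 → ∃ w ∈ s, 0 < v w) := by
  induction s using Multiset.induction_on with
  | empty =>
    intro h
    refine ⟨by simp, ?_, ?_⟩
    · simp only [Multiset.prod_zero]
      rw [v_one v hmul]
    · intro hne
      exact absurd (by simp only [Multiset.prod_zero]; exact v_one v hmul) hne
  | cons a s ih =>
    intro hmem
    obtain ⟨ha0, hav⟩ := hmem a (Multiset.mem_cons_self a s)
    obtain ⟨hp0, hpv, hpex⟩ := ih fun w hw => hmem w (Multiset.mem_cons_of_mem hw)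
    rw [Multiset.prod_cons]
    have hv := hmul a s.prod ha0 hp0
    refine ⟨mul_ne_zero ha0 hp0, by omega, ?_⟩
    intro hne
    rw [hv] at hne
    by_cases hva : 0 < v a
    · exact ⟨a, Multiset.mem_cons_self a s, hva⟩
    · obtain ⟨w, hw, hwv⟩ := hpex (by omega)
      exact ⟨w, Multiset.mem_cons_of_mem hw, hwv⟩
end ProdLemma


/-- For `n ≥ 2`, every rank-one discrete valuation `v` of `K_n | k`
centered at `M_n` has dimension at least `1`: there is `f ∈ K_n` with `v f = 0` whose
residue `f + m_v ∈ Δ_v` is transcendental over `k`; concretely, every nonzero polynomial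
over `k` evaluated at `f` is nonzero of value `0` (hence has nonzero residue). -/
theorem statement12 (k : Type u) [Field k] [IsAlgClosed k] [CharZero k]
    (n : ℕ) (hn : 2 ≤ n)
    (v : Kn k n → ℤ)
    -- `v` is a valuation on `K_n`:
    (hmul : ∀ x y : Kn k n, x ≠ 0 → y ≠ 0 → v (x * y) = v x + v y)
    (hmin : ∀ x y : Kn k n, x ≠ 0 → y ≠ 0 → x + y ≠ 0 → min (v x) (v y) ≤ v (x + y))
    -- `v` vanishes on `k^×`:
    (hconst : ∀ c : k, c ≠ 0 → v (toKn k n (MvPowerSeries.C (σ := Fin n) (R := k) c)) = 0)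
    -- `v` is nonnegative on `R_n ∖ {0}`:
    (hnonneg : ∀ f : Rn k n, f ≠ 0 → 0 ≤ v (toKn k n f))
    -- the center of `v` in `R_n` is the maximal ideal `M_n`:
    (hcenter : ∀ f : Rn k n, f ≠ 0 →
      (0 < v (toKn k n f) ↔ MvPowerSeries.constantCoeff (σ := Fin n) (R := k) f = 0)) :
    ∃ f : Kn k n, f ≠ 0 ∧ v f = 0 ∧
      ∀ p : Polynomial k, p ≠ 0 →
        Polynomial.eval₂ (cstKn k n) f p ≠ 0 ∧
        v (Polynomial.eval₂ (cstKn k n) f p) = 0 := by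
  classical
  by_contra hcon
  push_neg at hcon
  -- the constants map
  have hcsteq : ∀ c : k, cstKn k n c = toKn k n (MvPowerSeries.C (σ := Fin n) (R := k) c) := by
    intro c
    rw [MvPowerSeries.c_eq_algebraMap]
    rfl
  have hcst' : ∀ c : k, c ≠ 0 → v (cstKn k n c) = 0 := by
    intro c hc
    rw [hcsteq]
    exact hconst c hc
  -- the dim-zero assumption
  have hres : ∀ z : Kn k n, z ≠ 0 → v z = 0 →
      ∃ c : k, c ≠ 0 ∧ (z = cstKn k n c ∨ 0 < v (z - cstKn k n c)) := by
    intro z hz0 hvz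
    obtain ⟨p, hp0, hpc⟩ := hcon z hz0 hvz
    have hsplit := IsAlgClosed.splits p
    have heq := hsplit.eq_prod_roots
    have heval : Polynomial.eval₂ (cstKn k n) z p
        = cstKn k n p.leadingCoeff * (p.roots.map fun r => z - cstKn k n r).prod := by
      conv_lhs => rw [heq]
      rw [show Polynomial.eval₂ (cstKn k n) z (Polynomial.C p.leadingCoeff *
            (p.roots.map fun a => Polynomial.X - Polynomial.C a).prod)
          = (Polynomial.eval₂RingHom (cstKn k n) z) (Polynomial.C p.leadingCoeff *
            (p.roots.map fun a => Polynomial.X - Polynomial.C a).prod) from rfl]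
      rw [map_mul, map_multiset_prod, Multiset.map_map]
      congr 1
      · exact Polynomial.eval₂_C _ _
      · congr 1
        ext r
        simp [Polynomial.eval₂_sub]
    have halc : p.leadingCoeff ≠ 0 := Polynomial.leadingCoeff_ne_zero.mpr hp0
    have hcstlc : cstKn k n p.leadingCoeff ≠ 0 := fun h =>
      halc ((cstKn k n).injective (by rw [h, map_zero]))
    by_cases hroot : ∃ r ∈ p.roots, z = cstKn k n r
    · obtain ⟨r, _, hr⟩ := hroot
      have hr0 : r ≠ 0 := by
        intro h
        rw [h, map_zero] at hr
        exact hz0 hr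
      exact ⟨r, hr0, Or.inl hr⟩
    · push_neg at hroot
      have hfac : ∀ w ∈ p.roots.map fun r => z - cstKn k n r, w ≠ 0 ∧ 0 ≤ v w := by
        intro w hw
        rw [Multiset.mem_map] at hw
        obtain ⟨r, hrmem, rfl⟩ := hw
        have hne : z - cstKn k n r ≠ 0 := sub_ne_zero_of_ne (hroot r hrmem)
        refine ⟨hne, ?_⟩
        by_cases hr0 : r = 0
        · rw [hr0, map_zero, sub_zero]
          omega
        · have : z - cstKn k n r = z + (-(cstKn k n r)) := by ring
          rw [this]
          refine v_add_ge v hmin (Or.inr (by omega)) (Or.inr ?_) (by rw [← this]; exact hne)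
          rw [v_neg v hmul _ (fun h => hr0 ((cstKn k n).injective (by rw [h, map_zero]))),
            hcst' r hr0]
      obtain ⟨hprod0, hprodv, hprodex⟩ := v_prod v hmul _ hfac
      have hene : Polynomial.eval₂ (cstKn k n) z p ≠ 0 := by
        rw [heval]
        exact mul_ne_zero hcstlc hprod0
      have hvne := hpc hene
      have hveval : v (Polynomial.eval₂ (cstKn k n) z p)
          = v ((p.roots.map fun r => z - cstKn k n r).prod) := by
        rw [heval, hmul _ _ hcstlc hprod0, hcst' _ halc]
        omega
      obtain ⟨w, hwmem, hwv⟩ := hprodex (by omega)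
      rw [Multiset.mem_map] at hwmem
      obtain ⟨r, hrmem, rfl⟩ := hwmem
      have hr0 : r ≠ 0 := by
        intro h
        rw [h, map_zero, sub_zero] at hwv
        omega
      exact ⟨r, hr0, Or.inr hwv⟩
  -- the value group
  set Γ : AddSubgroup ℤ :=
    { carrier := {m | ∃ z : Kn k n, z ≠ 0 ∧ v z = m}
      zero_mem' := ⟨1, one_ne_zero, v_one v hmul⟩
      add_mem' := by
        rintro m m' ⟨z, hz, rfl⟩ ⟨w, hw, rfl⟩
        exact ⟨z * w, mul_ne_zero hz hw, hmul z w hz hw⟩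
      neg_mem' := by
        rintro m ⟨z, hz, rfl⟩
        exact ⟨z⁻¹, inv_ne_zero hz, v_inv v hmul z hz⟩ } with hΓdef
  obtain ⟨g, hΓ⟩ := Int.subgroup_cyclic Γ
  have hmemiff : ∀ m : ℤ, m ∈ Γ ↔ g ∣ m := by
    intro m
    rw [hΓ, AddSubgroup.mem_closure_singleton]
    constructor
    · rintro ⟨c, rfl⟩
      exact ⟨c, by rw [smul_eq_mul]; ring⟩
    · rintro ⟨c, rfl⟩
      exact ⟨c, by rw [smul_eq_mul]; ring⟩
  -- the two variables
  set i0 : Fin n := ⟨0, by omega⟩ with hi0def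
  set i1 : Fin n := ⟨1, by omega⟩ with hi1def
  have hi01 : i0 ≠ i1 := by
    rw [hi0def, hi1def]
    simp
  have hXne : ∀ i : Fin n, (MvPowerSeries.X i : Rn k n) ≠ 0 := by
    intro i h
    have h1 := congrArg (MvPowerSeries.coeff (R := k) (Finsupp.single i 1)) h
    rw [MvPowerSeries.X_def, MvPowerSeries.coeff_monomial_same, map_zero] at h1
    exact one_ne_zero h1
  have htoKninj : Function.Injective (toKn k n) := IsFractionRing.injective (Rn k n) (Kn k n)
  set x : Kn k n := toKn k n (MvPowerSeries.X i0) with hxdef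
  set y : Kn k n := toKn k n (MvPowerSeries.X i1) with hydef
  have hx0 : x ≠ 0 := fun h => hXne i0 (htoKninj (by rw [hxdef] at h; rw [h, map_zero]))
  have hy0 : y ≠ 0 := fun h => hXne i1 (htoKninj (by rw [hydef] at h; rw [h, map_zero]))
  have hvx : 0 < v x := (hcenter _ (hXne i0)).mpr (MvPowerSeries.constantCoeff_X i0)
  have hvy : 0 < v y := (hcenter _ (hXne i1)).mpr (MvPowerSeries.constantCoeff_X i1)
  have hg0 : g ≠ 0 := by
    intro h
    have hxg := (hmemiff (v x)).mp ⟨x, hx0, rfl⟩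
    rw [h] at hxg
    rw [zero_dvd_iff] at hxg
    omega
  set d : ℤ := |g| with hddef
  have hd : 0 < d := abs_pos.mpr hg0
  have hdvd : ∀ z : Kn k n, z ≠ 0 → d ∣ v z := by
    intro z hz
    rw [hddef, abs_dvd]
    exact (hmemiff (v z)).mp ⟨z, hz, rfl⟩
  have hdmem : d ∈ Γ := by
    have hgmem : g ∈ Γ := (hmemiff g).mpr dvd_rfl
    rcases abs_choice g with h | h
    · rw [hddef, h]; exact hgmem
    · rw [hddef, h]; exact Γ.neg_mem hgmem
  obtain ⟨π, hπ0, hvπ⟩ := hdmem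
  have H : VS v (cstKn k n) π d := ⟨hmul, hmin, hcst', hπ0, hd, hvπ, hdvd, hres⟩
  obtain ⟨P, q, ⟨j₁, hj₁P, hj₁⟩, hq2, hrel⟩ := H.main_relation x y hx0 hy0 hvx hvy
  -- build the power series H₀
  set cond : (Fin n →₀ ℕ) → Prop := fun μ => ∀ i : Fin n, i ≠ i0 → i ≠ i1 → μ i = 0
    with hconddef
  set H₀ : Rn k n := (fun μ => if cond μ then PowerSeries.coeff (R := k) (μ i0) (q (μ i1)) else 0 :
    (Fin n →₀ ℕ) → k) with hH₀def
  have hcoeffH₀ : ∀ μ : Fin n →₀ ℕ, MvPowerSeries.coeff (R := k) μ H₀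
      = if cond μ then PowerSeries.coeff (R := k) (μ i0) (q (μ i1)) else 0 := fun μ => rfl
  obtain ⟨m₁, hm₁⟩ : ∃ m, PowerSeries.coeff (R := k) m (q j₁) ≠ 0 := by
    by_contra h
    push_neg at h
    exact hj₁ (PowerSeries.ext fun m => by rw [h m, map_zero])
  set μstar : Fin n →₀ ℕ := Finsupp.single i0 m₁ + Finsupp.single i1 j₁ with hμstar
  have hμ0 : μstar i0 = m₁ := by
    rw [hμstar, Finsupp.add_apply, Finsupp.single_eq_same, Finsupp.single_eq_of_ne' hi01.symm,
      add_zero]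
  have hμ1 : μstar i1 = j₁ := by
    rw [hμstar, Finsupp.add_apply, Finsupp.single_eq_same, Finsupp.single_eq_of_ne' hi01,
      zero_add]
  have hμcond : cond μstar := by
    intro i h0 h1
    rw [hμstar, Finsupp.add_apply, Finsupp.single_eq_of_ne' (Ne.symm h0),
      Finsupp.single_eq_of_ne' (Ne.symm h1), add_zero]
  have hH₀ne : H₀ ≠ 0 := by
    intro h
    have h2 : MvPowerSeries.coeff (R := k) μstar H₀ = 0 := by rw [h, map_zero]
    rw [hcoeffH₀, if_pos hμcond, hμ0, hμ1] at h2
    exact hm₁ h2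
  set Hh : Kn k n := toKn k n H₀ with hHhdef
  have hHh0 : Hh ≠ 0 := fun h => hH₀ne (htoKninj (by rw [hHhdef] at h; rw [h, map_zero]))
  -- the main estimate
  have hbound : ∀ M : ℕ, (M : ℤ) < v Hh := by
    intro M
    set Q : Rn k n := ∑ j ∈ Finset.range (P+1), ∑ m ∈ Finset.range (M+1),
        (MvPowerSeries.monomial (R := k) (Finsupp.single i0 m + Finsupp.single i1 j))
          (PowerSeries.coeff (R := k) m (q j)) with hQdef
    have hmono : ∀ (m j : ℕ) (c : k),
        (MvPowerSeries.monomial (R := k) (Finsupp.single i0 m + Finsupp.single i1 j)) c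
          = MvPowerSeries.C (σ := Fin n) (R := k) c *
              ((MvPowerSeries.X i0) ^ m * (MvPowerSeries.X i1) ^ j) := by
      intro m j c
      rw [MvPowerSeries.X_pow_eq, MvPowerSeries.X_pow_eq, MvPowerSeries.monomial_mul_monomial,
        ← MvPowerSeries.monomial_zero_eq_C_apply, MvPowerSeries.monomial_mul_monomial]
      simp
    have htoQ : toKn k n Q = ∑ j ∈ Finset.range (P+1), ∑ m ∈ Finset.range (M+1),
        cstKn k n (PowerSeries.coeff (R := k) m (q j)) * (x ^ m * y ^ j) := by
      rw [hQdef, map_sum]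
      refine Finset.sum_congr rfl fun j _ => ?_
      rw [map_sum]
      refine Finset.sum_congr rfl fun m _ => ?_
      rw [hmono, map_mul, map_mul, map_pow, map_pow, hcsteq, hxdef, hydef]
    -- vanishing of low coefficients of H₀ - Q
    have hDvan : ∀ μ : Fin n →₀ ℕ, μ i0 ≤ M → MvPowerSeries.coeff (R := k) μ (H₀ - Q) = 0 := by
      intro μ hμM
      rw [map_sub, hcoeffH₀ μ]
      have hcoQ : MvPowerSeries.coeff (R := k) μ Q
          = ∑ j ∈ Finset.range (P+1), ∑ m ∈ Finset.range (M+1),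
              (if μ = Finsupp.single i0 m + Finsupp.single i1 j
                then PowerSeries.coeff (R := k) m (q j) else 0) := by
        rw [hQdef, map_sum]
        refine Finset.sum_congr rfl fun j _ => ?_
        rw [map_sum]
        refine Finset.sum_congr rfl fun m _ => ?_
        rw [MvPowerSeries.coeff_monomial]
      rw [hcoQ]
      by_cases hcond : cond μ
      · rw [if_pos hcond]
        have hrepr : μ = Finsupp.single i0 (μ i0) + Finsupp.single i1 (μ i1) := by
          ext i
          by_cases h0 : i = i0
          · subst h0
            rw [Finsupp.add_apply, Finsupp.single_eq_same,
              Finsupp.single_eq_of_ne' hi01.symm, add_zero]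
          by_cases h1 : i = i1
          · subst h1
            rw [Finsupp.add_apply, Finsupp.single_eq_same,
              Finsupp.single_eq_of_ne' hi01, zero_add]
          · rw [hcond i h0 h1, Finsupp.add_apply, Finsupp.single_eq_of_ne' (Ne.symm h0),
              Finsupp.single_eq_of_ne' (Ne.symm h1), add_zero]
        have huniq : ∀ m j : ℕ, μ = Finsupp.single i0 m + Finsupp.single i1 j →
            m = μ i0 ∧ j = μ i1 := by
          intro m j hμ
          constructor
          · rw [hμ, Finsupp.add_apply, Finsupp.single_eq_same,
              Finsupp.single_eq_of_ne' hi01.symm, add_zero]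
          · rw [hμ, Finsupp.add_apply, Finsupp.single_eq_same,
              Finsupp.single_eq_of_ne' hi01, zero_add]
        by_cases hjP : μ i1 ≤ P
        · rw [Finset.sum_eq_single (μ i1)]
          · rw [Finset.sum_eq_single (μ i0)]
            · rw [if_pos hrepr, sub_self]
            · intro m _ hm
              rw [if_neg fun hc => hm (huniq m (μ i1) hc).1]
            · intro hnot
              exact absurd (Finset.mem_range.mpr (by omega)) hnot
          · intro j _ hj
            refine Finset.sum_eq_zero fun m _ => ?_
            rw [if_neg fun hc => hj (huniq m j hc).2]
          · intro hnot
            exact absurd (Finset.mem_range.mpr (by omega)) hnot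
        · rw [hq2 (μ i1) (by omega), map_zero]
          rw [Finset.sum_eq_zero fun j hj => Finset.sum_eq_zero fun m _ => ?_]
          · simp
          · refine if_neg fun hc => ?_
            have := (huniq m j hc).2
            simp only [Finset.mem_range] at hj
            omega
      · rw [if_neg hcond]
        rw [Finset.sum_eq_zero fun j _ => Finset.sum_eq_zero fun m _ => ?_]
        · simp
        · refine if_neg fun hc => hcond ?_
          intro i h0 h1
          rw [hc, Finsupp.add_apply, Finsupp.single_eq_of_ne' (Ne.symm h0),
            Finsupp.single_eq_of_ne' (Ne.symm h1), add_zero]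
    -- factor out X i0 ^ (M+1)
    set E : Rn k n := (fun μ => MvPowerSeries.coeff (R := k) (μ + Finsupp.single i0 (M+1)) (H₀ - Q) :
      (Fin n →₀ ℕ) → k) with hEdef
    have hEcoeff : ∀ μ : Fin n →₀ ℕ, MvPowerSeries.coeff (R := k) μ E
        = MvPowerSeries.coeff (R := k) (μ + Finsupp.single i0 (M+1)) (H₀ - Q) := fun μ => rfl
    have hfac : H₀ - Q = (MvPowerSeries.X i0) ^ (M+1) * E := by
      apply MvPowerSeries.ext
      intro μ
      rw [MvPowerSeries.X_pow_eq, MvPowerSeries.coeff_monomial_mul]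
      by_cases hle : Finsupp.single i0 (M+1) ≤ μ
      · rw [if_pos hle, one_mul, hEcoeff, tsub_add_cancel_of_le hle]
      · rw [if_neg hle]
        refine hDvan μ ?_
        rw [Finsupp.single_le_iff] at hle
        omega
    have hHsplit : Hh = toKn k n Q + toKn k n (H₀ - Q) := by
      rw [hHhdef, ← map_add]
      congr 1
      ring
    have hSM := hrel M
    rw [← htoQ] at hSM
    by_cases hD0 : H₀ - Q = 0
    · have hHQ : Hh = toKn k n Q := by rw [hHsplit, hD0, map_zero, add_zero]
      rcases hSM with h | h
      · exact absurd (by rw [hHQ, h]) hHh0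
      · rw [hHQ]; exact h
    · have hE0 : E ≠ 0 := by
        intro h
        apply hD0
        rw [hfac, h, mul_zero]
      have htE0 : toKn k n E ≠ 0 := fun h => hE0 (htoKninj (by rw [h, map_zero]))
      have hvD : (M : ℤ) + 1 ≤ v (toKn k n (H₀ - Q)) := by
        rw [hfac, map_mul, map_pow]
        rw [hmul _ _ (pow_ne_zero _ hx0) htE0, v_pow v hmul x hx0 (M+1)]
        have hvE := hnonneg E hE0
        push_cast
        nlinarith [hvx]
      have htD0 : toKn k n (H₀ - Q) ≠ 0 := fun h => hD0 (htoKninj (by rw [h, map_zero]))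
      by_cases hS0 : toKn k n Q = 0
      · have : Hh = toKn k n (H₀ - Q) := by rw [hHsplit, hS0, zero_add]
        rw [this]
        omega
      · rcases hSM with h | h
        · exact absurd h hS0
        · have hmm := hmin _ _ hS0 htD0 (by rw [← hHsplit]; exact hHh0)
          rw [← hHsplit] at hmm
          omega
  have hfin := hbound (v Hh).toNat
  have := Int.self_le_toNat (v Hh)
  omega
end
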